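/- The classes of timed languages recognizable by nondeterministic timed automata (with arbitrarily many clocks) and by one-clock alternating timed automata are incomparable: there exists a timed language recognized by a one-clock alternating timed automaton but by no nondeterministic timed automaton, and there exists a timed language recognized by a (deterministic) nondeterministic timed automaton with two clocks but by no one-clock alternating timed automaton. -/

import Mathlib

/-- Clock constraints over a set `C` of clocks: comparisons with natural
number constants, closed under conjunction and negation. -/
inductive ClockConstraint (C : Type) : Type where
  | lt : C → ℕ → ClockConstraint C
  | le : C → ℕ → ClockConstraint C
  | conj : ClockConstraint C → ClockConstraint C → ClockConstraint C
  | neg : ClockConstraint C → ClockConstraint C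

/-- Satisfaction of a clock constraint by a clock valuation. -/
def ClockConstraint.sat {C : Type} (v : C → NNReal) : ClockConstraint C → Prop
  | .lt x c => (v x : ℝ) < (c : ℝ)
  | .le x c => (v x : ℝ) ≤ (c : ℝ)
  | .conj s t => s.sat v ∧ t.sat v
  | .neg s => ¬ s.sat v

/-- Positive boolean formulas over a set `X` of propositions. -/
inductive PosBool (X : Type) : Type where
  | atom : X → PosBool X
  | conj : PosBool X → PosBool X → PosBool X
  | disj : PosBool X → PosBool X → PosBool X

/-- Evaluation of a positive boolean formula under a valuation of atoms. -/
def PosBool.eval {X : Type} (f : X → Prop) : PosBool X → Prop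
  | .atom x => f x
  | .conj b c => b.eval f ∧ c.eval f
  | .disj b c => b.eval f ∨ c.eval f

/-- A positive boolean formula is disjunction-free (purely conjunctive). -/
def PosBool.orFree {X : Type} : PosBool X → Prop
  | .atom _ => True
  | .conj b c => b.orFree ∧ c.orFree
  | .disj _ _ => False

/-- A positive boolean formula is conjunction-free (purely disjunctive). -/
def PosBool.andFree {X : Type} : PosBool X → Prop
  | .atom _ => True
  | .conj _ _ => False
  | .disj b c => b.andFree ∧ c.andFree

open Classical in
/-- Reset the clocks in `r` to zero. -/
noncomputable def resetVal {C : Type} (v : C → NNReal) (r : Set C) : C → NNReal :=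
  fun x => if x ∈ r then 0 else v x

/-- A (finite) timed word: each letter comes with the delay elapsed since the
previous letter (a nonnegative real). -/
abbrev TimedWord (A : Type) : Type := List (A × NNReal)
/-- An alternating timed automaton with input alphabet `A`, clocks `C`,
locations `Q`.  The transition function is given, for each location and
letter, by a finite list of (guard, positive boolean formula) pairs; the
`partition` field is the Partition condition: for every location, letter and
clock valuation there is exactly one defined guard satisfied by the
valuation. -/
structure ATA (A C Q : Type) where
  init : Q
  accept : Set Q
  trans : Q → A → List (ClockConstraint C × PosBool (Q × Set C))
  partition : ∀ (q : Q) (a : A) (v : C → NNReal),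
    ∃! gb : ClockConstraint C × PosBool (Q × Set C), gb ∈ trans q a ∧ gb.1.sat v

/-- Acceptance of a timed word from a given configuration, defined by
recursion on the word: this is exactly the existence of a winning strategy
for Eve in the acceptance game (Eve resolves disjunctions, Adam
conjunctions), and Eve wins iff the final location is accepting. -/
def ATA.AccFrom {A C Q : Type} (M : ATA A C Q) : TimedWord A → Q → (C → NNReal) → Prop
  | [], q, _ => q ∈ M.accept
  | (a, t) :: w, q, v =>
      ∃ gb ∈ M.trans q a, gb.1.sat (fun x => v x + t) ∧
        gb.2.eval (fun qr => M.AccFrom w qr.1 (resetVal (fun x => v x + t) qr.2))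

/-- The timed language of an alternating timed automaton. -/
def ATA.lang {A C Q : Type} (M : ATA A C Q) : Set (TimedWord A) :=
  { w | M.AccFrom w M.init (fun _ => 0) }

/-- A purely universal ATA: no disjunction occurs in the transition formulas. -/
def ATA.PurelyUniversal {A C Q : Type} (M : ATA A C Q) : Prop :=
  ∀ (q : Q) (a : A), ∀ gb ∈ M.trans q a, gb.2.orFree

/-- A purely existential ATA: no conjunction occurs in the transition formulas. -/
def ATA.PurelyExistential {A C Q : Type} (M : ATA A C Q) : Prop :=
  ∀ (q : Q) (a : A), ∀ gb ∈ M.trans q a, gb.2.andFree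
/-- A transition rule of a nondeterministic timed automaton. -/
structure NTARule (A C Q : Type) where
  src : Q
  letter : A
  guard : ClockConstraint C
  tgt : Q
  resets : Set C

/-- A nondeterministic timed automaton with alphabet `A`, clocks `C` and
locations `Q`, given by a finite list of transition rules. -/
structure NTA (A C Q : Type) where
  init : Q
  accept : Set Q
  rules : List (NTARule A C Q)

/-- Acceptance (existence of an accepting run) from a configuration. -/
def NTA.AccFrom {A C Q : Type} (M : NTA A C Q) : TimedWord A → Q → (C → NNReal) → Prop
  | [], q, _ => q ∈ M.accept
  | (a, t) :: w, q, v =>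
      ∃ ρ ∈ M.rules, ρ.src = q ∧ ρ.letter = a ∧ ρ.guard.sat (fun x => v x + t) ∧
        M.AccFrom w ρ.tgt (resetVal (fun x => v x + t) ρ.resets)

/-- The timed language of a nondeterministic timed automaton. -/
def NTA.lang {A C Q : Type} (M : NTA A C Q) : Set (TimedWord A) :=
  { w | M.AccFrom w M.init (fun _ => 0) }

/-- Determinism: in every configuration at most one transition is enabled on
each input letter. -/
def NTA.Deterministic {A C Q : Type} (M : NTA A C Q) : Prop :=
  ∀ (v : C → NNReal), ∀ ρ₁ ∈ M.rules, ∀ ρ₂ ∈ M.rules,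
    ρ₁.src = ρ₂.src → ρ₁.letter = ρ₂.letter →
    ρ₁.guard.sat v → ρ₂.guard.sat v → ρ₁ = ρ₂

/-! ### Shared infrastructure -/

/-- Two reals lie strictly inside the same unit interval `(k, k+1)`. -/
def SameUI (a b : ℝ) : Prop :=
  ∃ k : ℕ, (k : ℝ) < a ∧ a < (k : ℝ) + 1 ∧ (k : ℝ) < b ∧ b < (k : ℝ) + 1

lemma SameUI.refl_of {a : ℝ} (k : ℕ) (h1 : (k:ℝ) < a) (h2 : a < (k:ℝ)+1) : SameUI a a :=
  ⟨k, h1, h2, h1, h2⟩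

lemma SameUI.symm {a b : ℝ} (h : SameUI a b) : SameUI b a := by
  obtain ⟨k, h1, h2, h3, h4⟩ := h; exact ⟨k, h3, h4, h1, h2⟩

lemma SameUI.lt_iff {a b : ℝ} (h : SameUI a b) (c : ℕ) : (a < c ↔ b < c) := by
  obtain ⟨k, h1, h2, h3, h4⟩ := h
  rcases le_or_gt (c:ℝ) (k:ℝ) with hc | hc
  · constructor <;> intro _ <;> nlinarith
  · have hck : (k:ℝ) + 1 ≤ c := by exact_mod_cast Nat.succ_le_of_lt (by exact_mod_cast hc)
    constructor <;> intro _ <;> nlinarith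

lemma SameUI.le_iff {a b : ℝ} (h : SameUI a b) (c : ℕ) : (a ≤ c ↔ b ≤ c) := by
  obtain ⟨k, h1, h2, h3, h4⟩ := h
  rcases le_or_gt (c:ℝ) (k:ℝ) with hc | hc
  · constructor <;> intro _ <;> nlinarith
  · have hck : (k:ℝ) + 1 ≤ c := by exact_mod_cast Nat.succ_le_of_lt (by exact_mod_cast hc)
    constructor <;> intro _ <;> nlinarith

/-- Clock-constraint satisfaction only depends on the unit intervals of the values. -/
lemma ClockConstraint.sat_congr {C : Type} (φ : ClockConstraint C) (v v' : C → NNReal)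
    (h : ∀ x, SameUI (v x) (v' x)) : φ.sat v ↔ φ.sat v' := by
  induction φ with
  | lt x c => exact (h x).lt_iff c
  | le x c => exact (h x).le_iff c
  | conj s t ihs iht => exact and_congr ihs iht
  | neg s ihs => exact not_congr ihs

lemma PosBool.eval_congr {X : Type} (b : PosBool X) (f g : X → Prop)
    (h : ∀ x, f x ↔ g x) : b.eval f ↔ b.eval g := by
  induction b with
  | atom x => exact h x
  | conj s t ihs iht => exact and_congr ihs iht
  | disj s t ihs iht => exact or_congr ihs iht

lemma resetVal_mem {C : Type} (v : C → NNReal) (r : Set C) {x : C} (hx : x ∈ r) :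
    resetVal v r x = 0 := by simp [resetVal, hx]

lemma resetVal_not_mem {C : Type} (v : C → NNReal) (r : Set C) {x : C} (hx : x ∉ r) :
    resetVal v r x = v x := by simp [resetVal, hx]

/-- absolute time of the `k`-th event (1-based) of a timed word. -/
def TS {A : Type} (w : TimedWord A) (k : ℕ) : ℝ := ((w.take k).map (fun e => (e.2 : ℝ))).sum

lemma TS_zero {A : Type} (w : TimedWord A) : TS w 0 = 0 := by simp [TS]

lemma TS_cons {A : Type} (e : A × NNReal) (w : TimedWord A) (k : ℕ) :
    TS (e :: w) (k+1) = (e.2 : ℝ) + TS w k := by simp [TS]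

/-! ### Part 1: the one-clock ATA `M1` and its language -/

namespace Part1

def gTrue : ClockConstraint (Fin 1) := .neg (.lt 0 0)
def gEq1 : ClockConstraint (Fin 1) := .conj (.le 0 1) (.neg (.lt 0 1))
def gNe1 : ClockConstraint (Fin 1) := .neg gEq1

lemma gTrue_sat (v : Fin 1 → NNReal) : gTrue.sat v := by
  simp [gTrue, ClockConstraint.sat]

lemma gEq1_sat (v : Fin 1 → NNReal) : gEq1.sat v ↔ (v 0 : ℝ) = 1 := by
  simp only [gEq1, ClockConstraint.sat, not_lt]
  push_cast
  constructor
  · rintro ⟨h1, h2⟩; linarith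
  · intro h; exact ⟨le_of_eq h, ge_of_eq h⟩

lemma gNe1_sat (v : Fin 1 → NNReal) : gNe1.sat v ↔ (v 0 : ℝ) ≠ 1 := by
  simp only [gNe1, ClockConstraint.sat]
  exact not_congr (gEq1_sat v)

def f0 : PosBool (Fin 3 × Set (Fin 1)) := .conj (.atom (0, ∅)) (.atom (1, Set.univ))
def f1bad : PosBool (Fin 3 × Set (Fin 1)) := .atom (2, ∅)
def f1ok : PosBool (Fin 3 × Set (Fin 1)) := .atom (1, ∅)
def f2 : PosBool (Fin 3 × Set (Fin 1)) := .atom (2, ∅)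

noncomputable def M1 : ATA Unit (Fin 1) (Fin 3) where
  init := 0
  accept := {q | q = 0 ∨ q = 1}
  trans := fun q _ =>
    if q = 0 then [(gTrue, f0)]
    else if q = 1 then [(gEq1, f1bad), (gNe1, f1ok)]
    else [(gTrue, f2)]
  partition := by
    intro q a v
    fin_cases q
    · refine ⟨(gTrue, f0), ⟨by simp, gTrue_sat v⟩, ?_⟩
      rintro gb ⟨hm, _⟩; simpa using hm
    · by_cases h : (v 0 : ℝ) = 1
      · refine ⟨(gEq1, f1bad), ⟨by simp, (gEq1_sat v).2 h⟩, ?_⟩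
        rintro gb ⟨hm, hs⟩
        simp only [Fin.mk_one, Fin.isValue, one_ne_zero, ↓reduceIte, List.mem_cons,
          List.mem_singleton, List.not_mem_nil, or_false] at hm
        rcases hm with rfl | rfl
        · rfl
        · exact absurd h (by simpa using (gNe1_sat v).1 hs)
      · refine ⟨(gNe1, f1ok), ⟨by simp, (gNe1_sat v).2 h⟩, ?_⟩
        rintro gb ⟨hm, hs⟩
        simp only [Fin.mk_one, Fin.isValue, one_ne_zero, ↓reduceIte, List.mem_cons,
          List.mem_singleton, List.not_mem_nil, or_false] at hm
        rcases hm with rfl | rfl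
        · exact absurd ((gEq1_sat v).1 hs) h
        · rfl
    · refine ⟨(gTrue, f2), ⟨by simp, gTrue_sat v⟩, ?_⟩
      rintro gb ⟨hm, _⟩
      have : ¬((2:Fin 3) = 0) := by decide
      simpa [this] using hm


def WGood (w : TimedWord Unit) (v0 : ℝ) : Prop :=
  ∀ l, 1 ≤ l → l ≤ w.length → v0 + TS w l ≠ 1

def NoPair (w : TimedWord Unit) : Prop :=
  ∀ i j, 1 ≤ i → i < j → j ≤ w.length → TS w j - TS w i ≠ 1

lemma noPair_cons (e : Unit × NNReal) (w : TimedWord Unit) :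
    NoPair (e :: w) ↔ WGood w 0 ∧ NoPair w := by
  constructor
  · intro h
    constructor
    · intro l h1 hl
      have := h 1 (l+1) le_rfl (by omega) (by simp; omega)
      rw [TS_cons, TS_cons, TS_zero] at this
      intro hc; apply this; linarith
    · intro i j hi hij hj
      have := h (i+1) (j+1) (by omega) (by omega) (by simp; omega)
      rw [TS_cons, TS_cons] at this
      intro hc; apply this; linarith
  · rintro ⟨h1, h2⟩ i j hi hij hj
    match i, hi with
    | 1, _ =>
      match j, hij with
      | (j'+1), _ =>
        rw [TS_cons, TS_cons, TS_zero]
        have := h1 j' (by omega) (by simpa using hj)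
        intro hc; apply this; linarith
    | (i'+2), _ =>
      match j, hij with
      | (j'+1), _ =>
        rw [TS_cons, TS_cons]
        have := h2 (i'+1) j' (by omega) (by omega) (by simpa using hj)
        intro hc; apply this; linarith

lemma acc2 (w : TimedWord Unit) (v : Fin 1 → NNReal) : ¬ M1.AccFrom w 2 v := by
  induction w generalizing v with
  | nil => simp [ATA.AccFrom, M1]
  | cons e w ih =>
    obtain ⟨a, t⟩ := e
    rintro ⟨gb, hm, hs, he⟩
    have : gb = (gTrue, f2) := by
      simpa [M1, show ¬((2:Fin 3) = 0) by decide, show ¬((2:Fin 3) = 1) by decide] using hm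
    subst this
    exact ih _ he

lemma acc1 (w : TimedWord Unit) (v : Fin 1 → NNReal) :
    M1.AccFrom w 1 v ↔ WGood w (v 0) := by
  induction w generalizing v with
  | nil =>
    simp only [ATA.AccFrom]
    constructor
    · intro _ l h1 hl; simp at hl; omega
    · intro _; simp [M1]
  | cons e w ih =>
    obtain ⟨a, t⟩ := e
    have hmem : M1.trans 1 a = [(gEq1, f1bad), (gNe1, f1ok)] := by
      simp [M1, show ¬((1:Fin 3) = 0) by decide]
    constructor
    · rintro ⟨gb, hm, hs, he⟩
      rw [hmem] at hm
      simp only [List.mem_cons, List.not_mem_nil, or_false] at hm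
      rcases hm with rfl | rfl
      · exact absurd he (acc2 _ _)
      · have hne : ((v 0 : ℝ) + (t : ℝ)) ≠ 1 := by
          have := (gNe1_sat _).1 hs; simpa using this
        simp only [f1ok, PosBool.eval] at he
        have he' := (ih _).1 he
        intro l h1 hl
        match l, h1 with
        | 1, _ =>
          rw [TS_cons, TS_zero]
          intro hc; exact hne (by linarith)
        | (l'+2), _ =>
          rw [TS_cons]
          have := he' (l'+1) (by omega) (by simpa using hl)
          rw [resetVal_not_mem _ _ (by simp)] at this
          simp only [NNReal.coe_add] at this
          intro hc; apply this; linarith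
    · intro h
      have hne : ((v 0 : ℝ) + (t : ℝ)) ≠ 1 := by
        have := h 1 (by omega) (by simp)
        rw [TS_cons, TS_zero] at this
        intro hc; apply this; linarith
      refine ⟨(gNe1, f1ok), by rw [hmem]; simp, (gNe1_sat _).2 (by simpa using hne), ?_⟩
      simp only [f1ok, PosBool.eval]
      rw [ih]
      intro l h1 hl
      rw [resetVal_not_mem _ _ (by simp)]
      have := h (l+1) (by omega) (by simp only [List.length_cons]; omega)
      rw [TS_cons] at this
      simp only [NNReal.coe_add]
      intro hc; apply this; linarith

lemma acc0 (w : TimedWord Unit) (v : Fin 1 → NNReal) :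
    M1.AccFrom w 0 v ↔ NoPair w := by
  induction w generalizing v with
  | nil =>
    simp only [ATA.AccFrom]
    constructor
    · intro _ i j hi hij hj; simp at hj; omega
    · intro _; simp [M1]
  | cons e w ih =>
    obtain ⟨a, t⟩ := e
    have hmem : M1.trans 0 a = [(gTrue, f0)] := by simp [M1]
    rw [noPair_cons]
    constructor
    · rintro ⟨gb, hm, hs, he⟩
      rw [hmem] at hm
      simp only [List.mem_singleton, List.not_mem_nil, or_false] at hm; subst hm
      simp only [f0, PosBool.eval] at he
      obtain ⟨he0, he1⟩ := he
      refine ⟨?_, (ih _).1 he0⟩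
      have := (acc1 _ _).1 he1
      rw [resetVal_mem _ _ (by simp [Set.mem_univ])] at this
      simpa using this
    · rintro ⟨h1, h2⟩
      refine ⟨(gTrue, f0), by rw [hmem]; simp, gTrue_sat _, ?_⟩
      simp only [f0, PosBool.eval]
      refine ⟨(ih _).2 h2, ?_⟩
      rw [acc1]
      rw [resetVal_mem _ _ (by simp [Set.mem_univ])]
      simpa using h1

lemma M1_lang : M1.lang = { w | NoPair w } := by
  ext w; exact acc0 w _

end Part1

/-! ### Runs of an NTA -/

namespace NTARun

variable {A C Q : Type} (N : NTA A C Q)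

def RunAcc : TimedWord A → Q → (C → NNReal) → List (NTARule A C Q) → Prop
  | [], q, _, [] => q ∈ N.accept
  | (a,t)::w, q, v, ρ::rs => ρ ∈ N.rules ∧ ρ.src = q ∧ ρ.letter = a ∧
      ρ.guard.sat (fun x => v x + t) ∧ RunAcc w ρ.tgt (resetVal (fun x => v x + t) ρ.resets) rs
  | _, _, _, _ => False

def RunReach : TimedWord A → Q → (C → NNReal) → List (NTARule A C Q) → Q → (C → NNReal) → Prop
  | [], q, v, [], q', v' => q' = q ∧ v' = v
  | (a,t)::w, q, v, ρ::rs, q', v' => ρ ∈ N.rules ∧ ρ.src = q ∧ ρ.letter = a ∧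
      ρ.guard.sat (fun x => v x + t) ∧
      RunReach w ρ.tgt (resetVal (fun x => v x + t) ρ.resets) rs q' v'
  | _, _, _, _, _, _ => False

lemma accFrom_iff_runAcc (w : TimedWord A) (q : Q) (v : C → NNReal) :
    N.AccFrom w q v ↔ ∃ rs, RunAcc N w q v rs := by
  induction w generalizing q v with
  | nil =>
    constructor
    · intro h; exact ⟨[], h⟩
    · rintro ⟨rs, h⟩; cases rs with
      | nil => exact h
      | cons ρ rs => exact absurd h (by simp [RunAcc])
  | cons e w ih =>
    obtain ⟨a, t⟩ := e
    constructor
    · rintro ⟨ρ, hm, hsrc, hl, hs, hacc⟩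
      obtain ⟨rs, hrs⟩ := (ih _ _).1 hacc
      exact ⟨ρ :: rs, hm, hsrc, hl, hs, hrs⟩
    · rintro ⟨rs, hrs⟩
      cases rs with
      | nil => exact absurd hrs (by simp [RunAcc])
      | cons ρ rs =>
        obtain ⟨hm, hsrc, hl, hs, h⟩ := hrs
        exact ⟨ρ, hm, hsrc, hl, hs, (ih _ _).2 ⟨rs, h⟩⟩

lemma runAcc_split (u : TimedWord A) :
    ∀ (w : TimedWord A) (q : Q) (v : C → NNReal) (rs : List (NTARule A C Q)),
    RunAcc N (u ++ w) q v rs →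
    ∃ rs1 rs2 q' v', rs = rs1 ++ rs2 ∧ RunReach N u q v rs1 q' v' ∧ RunAcc N w q' v' rs2 := by
  induction u with
  | nil =>
    intro w q v rs h
    exact ⟨[], rs, q, v, rfl, ⟨rfl, rfl⟩, h⟩
  | cons e u ih =>
    obtain ⟨a, t⟩ := e
    intro w q v rs h
    cases rs with
    | nil => exact absurd h (by simp [RunAcc])
    | cons ρ rs =>
      obtain ⟨hm, hsrc, hl, hs, h⟩ := h
      obtain ⟨rs1, rs2, q', v', rfl, hr, ha⟩ := ih w _ _ rs h
      exact ⟨ρ :: rs1, rs2, q', v', rfl, ⟨hm, hsrc, hl, hs, hr⟩, ha⟩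

lemma runReach_split (u : TimedWord A) :
    ∀ (w : TimedWord A) (q : Q) (v : C → NNReal) (rs : List (NTARule A C Q)) q'' v'',
    RunReach N (u ++ w) q v rs q'' v'' →
    ∃ rs1 rs2 q' v', rs = rs1 ++ rs2 ∧ RunReach N u q v rs1 q' v' ∧
      RunReach N w q' v' rs2 q'' v'' := by
  induction u with
  | nil =>
    intro w q v rs q'' v'' h
    exact ⟨[], rs, q, v, rfl, ⟨rfl, rfl⟩, h⟩
  | cons e u ih =>
    obtain ⟨a, t⟩ := e
    intro w q v rs q'' v'' h
    cases rs with
    | nil => exact absurd h (by simp [RunReach])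
    | cons ρ rs =>
      obtain ⟨hm, hsrc, hl, hs, h⟩ := h
      obtain ⟨rs1, rs2, q', v', rfl, hr, ha⟩ := ih w _ _ rs _ _ h
      exact ⟨ρ :: rs1, rs2, q', v', rfl, ⟨hm, hsrc, hl, hs, hr⟩, ha⟩

lemma runReach_comp_acc :
    ∀ (u w : TimedWord A) (q : Q) (v : C → NNReal) rs1 rs2 q' v',
    RunReach N u q v rs1 q' v' → RunAcc N w q' v' rs2 →
    RunAcc N (u ++ w) q v (rs1 ++ rs2) := by
  intro u
  induction u with
  | nil =>
    intro w q v rs1 rs2 q' v' hr ha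
    cases rs1 with
    | nil => obtain ⟨rfl, rfl⟩ := hr; exact ha
    | cons ρ rs => exact absurd hr (by simp [RunReach])
  | cons e u ih =>
    obtain ⟨a, t⟩ := e
    intro w q v rs1 rs2 q' v' hr ha
    cases rs1 with
    | nil => exact absurd hr (by simp [RunReach])
    | cons ρ rs =>
      obtain ⟨hm, hsrc, hl, hs, h⟩ := hr
      exact ⟨hm, hsrc, hl, hs, ih w _ _ rs rs2 _ _ h ha⟩

/-- Sum of the (coerced) delays of a timed word. -/
def SD (w : TimedWord A) : ℝ := (w.map (fun e => (e.2 : ℝ))).sum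

lemma SD_cons (e : A × NNReal) (w : TimedWord A) : SD (e :: w) = (e.2 : ℝ) + SD w := by
  simp [SD]

lemma SD_nil : SD ([] : TimedWord A) = 0 := by simp [SD]

/-- Backwards propagation: a clock value at the end of a positive-delay segment
which is at least the total duration of the segment was already present at the start. -/
lemma reach_back :
    ∀ (u : TimedWord A) (q : Q) (v : C → NNReal) rs q' v',
    RunReach N u q v rs q' v' → (∀ e ∈ u, (0:ℝ) < e.2) →
    ∀ (x : C) (s : ℝ), 0 ≤ s → (v' x : ℝ) = SD u + s → (v x : ℝ) = s := by
  intro u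
  induction u with
  | nil =>
    intro q v rs q' v' hr _ x s _ hvx
    cases rs with
    | nil => obtain ⟨rfl, rfl⟩ := hr; rw [hvx, SD_nil]; ring
    | cons ρ rs => exact absurd hr (by simp [RunReach])
  | cons e u ih =>
    obtain ⟨a, t⟩ := e
    intro q v rs q' v' hr hpos x s hs hvx
    cases rs with
    | nil => exact absurd hr (by simp [RunReach])
    | cons ρ rs =>
      obtain ⟨hm, hsrc, hl, hsat, h⟩ := hr
      have ht : (0:ℝ) < t := hpos (a,t) (by simp)
      have h1 : (resetVal (fun x => v x + t) ρ.resets x : ℝ) = s + t := by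
        rw [SD_cons] at hvx
        exact ih _ _ rs _ _ h (fun e he => hpos e (by simp [he])) x (s + t)
          (by linarith) (by linarith)
      by_cases hx : x ∈ ρ.resets
      · rw [resetVal_mem _ _ hx] at h1
        exfalso
        simp only [NNReal.coe_zero] at h1
        linarith
      · rw [resetVal_not_mem _ _ hx] at h1
        simp only [NNReal.coe_add] at h1
        linarith

/-- Forwards form: every clock value at the end of a segment is either the initial
value plus the duration, or the time since one of the events of the segment. -/
lemma reach_form :
    ∀ (u : TimedWord A) (q : Q) (v : C → NNReal) rs q' v',
    RunReach N u q v rs q' v' →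
    ∀ x : C, ((v' x : ℝ) = (v x : ℝ) + SD u) ∨
      ∃ k, 1 ≤ k ∧ k ≤ u.length ∧ (v' x : ℝ) = SD u - TS u k := by
  intro u
  induction u with
  | nil =>
    intro q v rs q' v' hr x
    cases rs with
    | nil => obtain ⟨rfl, rfl⟩ := hr; left; rw [SD_nil]; ring
    | cons ρ rs => exact absurd hr (by simp [RunReach])
  | cons e u ih =>
    obtain ⟨a, t⟩ := e
    intro q v rs q' v' hr x
    cases rs with
    | nil => exact absurd hr (by simp [RunReach])
    | cons ρ rs =>
      obtain ⟨hm, hsrc, hl, hsat, h⟩ := hr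
      rcases ih _ _ rs _ _ h x with h1 | ⟨k, hk1, hk2, h1⟩
      · by_cases hx : x ∈ ρ.resets
        · right
          refine ⟨1, le_rfl, by simp, ?_⟩
          rw [resetVal_mem _ _ hx] at h1
          rw [SD_cons, TS_cons, TS_zero]
          simp only [NNReal.coe_zero] at h1
          linarith
        · left
          rw [resetVal_not_mem _ _ hx] at h1
          rw [SD_cons]
          simp only [NNReal.coe_add] at h1
          linarith
      · right
        refine ⟨k+1, by omega, by simp; omega, ?_⟩
        rw [SD_cons, TS_cons, h1]
        ring

end NTARun

namespace Part1

lemma sameUI01 {a b : ℝ} (h1 : 0 < a) (h2 : a < 1) (h3 : 0 < b) (h4 : b < 1) : SameUI a b :=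
  ⟨0, by push_cast; exact h1, by push_cast; linarith, by push_cast; exact h3, by push_cast; linarith⟩

lemma sameUI12 {a b : ℝ} (h1 : 1 < a) (h2 : a < 2) (h3 : 1 < b) (h4 : b < 2) : SameUI a b :=
  ⟨1, by push_cast; exact h1, by push_cast; linarith, by push_cast; exact h3, by push_cast; linarith⟩

/-- the timed word with `cnt` events at times `f (a+1), …, f (a+cnt)`, starting
from time `f a`. -/
noncomputable def mkW (f : ℕ → ℝ) : ℕ → ℕ → TimedWord Unit
  | 0 => fun _ => []
  | (cnt+1) => fun a => ((), Real.toNNReal (f (a+1) - f a)) :: mkW f cnt (a+1)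

@[simp] lemma mkW_zero (f : ℕ → ℝ) (a : ℕ) : mkW f 0 a = [] := rfl

lemma mkW_succ (f : ℕ → ℝ) (cnt a : ℕ) :
    mkW f (cnt+1) a = ((), Real.toNNReal (f (a+1) - f a)) :: mkW f cnt (a+1) := rfl

lemma mkW_append (f : ℕ → ℝ) : ∀ (c1 c2 a : ℕ),
    mkW f (c1 + c2) a = mkW f c1 a ++ mkW f c2 (a + c1) := by
  intro c1
  induction c1 with
  | zero => intro c2 a; simp
  | succ c1 ih =>
    intro c2 a
    have h : c1 + 1 + c2 = (c1 + c2) + 1 := by omega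
    rw [h, mkW_succ, ih c2 (a+1), mkW_succ, List.cons_append]
    have h2 : a + 1 + c1 = a + (c1 + 1) := by omega
    rw [h2]

lemma mkW_length (f : ℕ → ℝ) : ∀ cnt a, (mkW f cnt a).length = cnt := by
  intro cnt
  induction cnt with
  | zero => intro a; simp
  | succ cnt ih => intro a; rw [mkW_succ]; simp [ih]

lemma mkW_congr (f g : ℕ → ℝ) : ∀ (cnt a : ℕ), (∀ i, a ≤ i → i ≤ a + cnt → f i = g i) →
    mkW f cnt a = mkW g cnt a := by
  intro cnt
  induction cnt with
  | zero => intro a _; simp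
  | succ cnt ih =>
    intro a h
    rw [mkW_succ, mkW_succ, h a (le_refl a) (by omega), h (a+1) (by omega) (by omega),
      ih (a+1) (fun i h1 h2 => h i (by omega) (by omega))]

lemma TS_mkW (f : ℕ → ℝ) : ∀ (k cnt a : ℕ), k ≤ cnt →
    (∀ i, a ≤ i → i < a + cnt → f i ≤ f (i+1)) →
    TS (mkW f cnt a) k = f (a+k) - f a := by
  intro k
  induction k with
  | zero => intro cnt a _ _; rw [TS_zero]; simp
  | succ k ih =>
    intro cnt a hk hmono
    match cnt, hk with
    | (cnt+1), _ =>
      rw [mkW_succ, TS_cons]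
      have h1 : (0:ℝ) ≤ f (a+1) - f a := by
        have := hmono a le_rfl (by omega); linarith
      rw [Real.coe_toNNReal _ h1, ih cnt (a+1) (by omega)
        (fun i hi1 hi2 => hmono i (by omega) (by omega))]
      have : a + 1 + k = a + (k+1) := by omega
      rw [this]; ring

lemma SD_mkW (f : ℕ → ℝ) (cnt a : ℕ)
    (hmono : ∀ i, a ≤ i → i < a + cnt → f i ≤ f (i+1)) :
    NTARun.SD (mkW f cnt a) = f (a+cnt) - f a := by
  have h1 : NTARun.SD (mkW f cnt a) = TS (mkW f cnt a) cnt := by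
    unfold NTARun.SD TS
    rw [List.take_of_length_le (by rw [mkW_length])]
  rw [h1, TS_mkW f cnt cnt a le_rfl hmono]

lemma mkW_pos (f : ℕ → ℝ) : ∀ (cnt a : ℕ),
    (∀ i, a ≤ i → i < a + cnt → f i < f (i+1)) →
    ∀ e ∈ mkW f cnt a, (0:ℝ) < e.2 := by
  intro cnt
  induction cnt with
  | zero => intro a _ e he; simp at he
  | succ cnt ih =>
    intro a h e he
    rw [mkW_succ] at he
    simp only [List.mem_cons] at he
    rcases he with rfl | he
    · have := h a le_rfl (by omega)
      simp only []
      rw [Real.coe_toNNReal _ (by linarith)]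
      linarith
    · exact ih (a+1) (fun i h1 h2 => h i (by omega) (by omega)) e he

/-- Step-wise region-compatibility of two timed words relative to starting
valuations. -/
def Compat {C : Type} : TimedWord Unit → TimedWord Unit → (C → NNReal) → (C → NNReal) → Prop
  | [], [], _, _ => True
  | (_,t)::w, (_,t')::w', v, v' =>
      (∀ x, SameUI ((v x:ℝ) + t) ((v' x:ℝ) + t')) ∧
      ∀ rset : Set C, Compat w w'
        (resetVal (fun x => v x + t) rset) (resetVal (fun x => v' x + t') rset)
  | _, _, _, _ => False

lemma transfer {C Q : Type} (N : NTA Unit C Q) :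
    ∀ (w w' : TimedWord Unit) (q : Q) (v v' : C → NNReal) rs,
    NTARun.RunAcc N w q v rs → Compat w w' v v' → NTARun.RunAcc N w' q v' rs := by
  intro w
  induction w with
  | nil =>
    intro w' q v v' rs ha hc
    cases w' with
    | nil =>
      cases rs with
      | nil => exact ha
      | cons ρ rs => exact absurd ha (by simp [NTARun.RunAcc])
    | cons e w' => exact absurd hc (by simp [Compat])
  | cons e w ih =>
    obtain ⟨a, t⟩ := e
    intro w' q v v' rs ha hc
    cases w' with
    | nil => exact absurd hc (by simp [Compat])
    | cons e' w' =>
      obtain ⟨a', t'⟩ := e'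
      cases rs with
      | nil => exact absurd ha (by simp [NTARun.RunAcc])
      | cons ρ rs =>
        obtain ⟨hm, hsrc, hl, hs, h⟩ := ha
        obtain ⟨h1, h2⟩ := hc
        refine ⟨hm, hsrc, Subsingleton.elim _ _, ?_, ?_⟩
        · refine (ClockConstraint.sat_congr ρ.guard _ _ (fun x => ?_)).1 hs
          have := h1 x
          simpa [NNReal.coe_add] using this
        · exact ih w' _ _ _ rs h (h2 ρ.resets)

section Construction

variable (n : ℕ)

noncomputable def gam : ℝ := 1/(2*(n+1))

noncomputable def eta : ℝ := gam n / 2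

noncomputable def timeOf (i : ℕ) : ℝ :=
  if i ≤ n then i * gam n else 1 - eta n + (i - n : ℕ) * gam n

noncomputable def timeOf' (j i : ℕ) : ℝ := timeOf n i + (if i = n + j then eta n else 0)

lemma gam_pos : 0 < gam n := by
  unfold gam; positivity

lemma gam_sum : (n:ℝ) * gam n + gam n = 1/2 := by
  unfold gam; field_simp

lemma eta_pos : 0 < eta n := by unfold eta; linarith [gam_pos n]

lemma eta_lt : eta n < gam n := by unfold eta; linarith [gam_pos n]

lemma timeOf_zero : timeOf n 0 = 0 := by simp [timeOf]

lemma nat_mul_gam_le {m : ℕ} (hm : m ≤ n) : (m:ℝ) * gam n ≤ (n:ℝ) * gam n :=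
  mul_le_mul_of_nonneg_right (by exact_mod_cast hm) (gam_pos n).le

lemma timeOf_step (i : ℕ) : timeOf n i < timeOf n (i+1) := by
  have hγ := gam_pos n
  have hη := eta_pos n
  have hηγ := eta_lt n
  have hs := gam_sum n
  unfold timeOf
  rcases le_or_gt (i+1) n with h | h
  · rw [if_pos (by omega), if_pos h]
    push_cast; nlinarith
  · rcases le_or_gt i n with h2 | h2
    · rw [if_pos h2, if_neg (by omega)]
      have h4 : (i + 1 - n : ℕ) = 1 := by omega
      rw [h4]
      have h5 := nat_mul_gam_le n h2
      push_cast
      nlinarith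
    · rw [if_neg (by omega), if_neg (by omega)]
      have h3 : (i + 1 - n : ℕ) = (i - n) + 1 := by omega
      rw [h3]
      push_cast
      nlinarith

lemma timeOf_mono : StrictMono (timeOf n) := strictMono_nat_of_lt_succ (timeOf_step n)

lemma timeOf'_step (j : ℕ) (hj : 1 ≤ j) (i : ℕ) : timeOf' n j i < timeOf' n j (i+1) := by
  have hγ := gam_pos n
  have hη := eta_pos n
  have hηγ := eta_lt n
  unfold timeOf'
  rcases eq_or_ne (i+1) (n+j) with h | h
  · rw [if_pos h, if_neg (by omega)]
    have := timeOf_step n i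
    linarith
  · rw [if_neg h]
    rcases eq_or_ne i (n+j) with h2 | h2
    · rw [if_pos h2]
      subst h2
      unfold timeOf
      rw [if_neg (by omega), if_neg (by omega)]
      have h3 : (n + j + 1 - n : ℕ) = (n + j - n) + 1 := by omega
      rw [h3]
      push_cast
      nlinarith
    · rw [if_neg h2]
      have := timeOf_step n i
      linarith

lemma timeOf'_mono (j : ℕ) (hj : 1 ≤ j) : StrictMono (timeOf' n j) :=
  strictMono_nat_of_lt_succ (timeOf'_step n j hj)

lemma timeOf_prefix {i : ℕ} (h : i ≤ n) : timeOf n i = i * gam n := if_pos h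

lemma timeOf_suffix {i : ℕ} (h : n < i) : timeOf n i = 1 - eta n + (i - n : ℕ) * gam n :=
  if_neg (by omega)

/-- The key arithmetic fact: region compatibility of corresponding clock values. -/
lemma keySameUI (j i q : ℕ) (hn : 1 ≤ n) (hj1 : 1 ≤ j) (hjn : j ≤ n)
    (hq1 : n + j ≤ q) (hq2 : q ≤ 2*n) (hi : i < q) (hij : i ≠ j) :
    SameUI (timeOf n q - timeOf n i) (timeOf' n j q - timeOf' n j i) := by
  have hγ := gam_pos n
  have hη := eta_pos n
  have hηγ := eta_lt n
  have hs := gam_sum n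
  have hq : timeOf n q = 1 - eta n + (q - n : ℕ) * gam n := timeOf_suffix n (by omega)
  have hkbound : ((q - n : ℕ):ℝ) * gam n ≤ (n:ℝ) * gam n := nat_mul_gam_le n (by omega)
  have hk1 : gam n ≤ ((q - n : ℕ):ℝ) * gam n := by
    have : (1:ℝ) ≤ ((q - n : ℕ) : ℝ) := by exact_mod_cast (by omega : 1 ≤ q - n)
    nlinarith
  rcases le_or_gt i n with hin | hin
  · -- i ≤ n : reset at a prefix event (or never)
    have hiv : timeOf n i = i * gam n := timeOf_prefix n hin
    have hibound : (i:ℝ) * gam n ≤ (n:ℝ) * gam n := nat_mul_gam_le n hin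
    have hipos : (0:ℝ) ≤ (i:ℝ) * gam n := by positivity
    unfold timeOf'
    rw [if_neg (show i ≠ n + j by omega), hq, hiv]
    rcases lt_or_ge i (q - n) with hik | hik
    · -- i < q - n : value in (1,2)
      have hp : ((i:ℝ) + 1) * gam n ≤ ((q - n : ℕ):ℝ) * gam n :=
        mul_le_mul_of_nonneg_right (by exact_mod_cast hik) hγ.le
      rcases eq_or_ne q (n+j) with hqj | hqj
      · rw [if_pos hqj]
        exact sameUI12 (by linarith) (by linarith) (by linarith) (by linarith)
      · rw [if_neg hqj]
        exact sameUI12 (by linarith) (by linarith) (by linarith) (by linarith)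
    · -- q - n ≤ i : value in (0,1)
      have hp : ((q - n : ℕ):ℝ) * gam n ≤ (i:ℝ) * gam n :=
        mul_le_mul_of_nonneg_right (by exact_mod_cast hik) hγ.le
      rcases eq_or_ne q (n+j) with hqj | hqj
      · -- then q - n = j and i > j since i ≠ j
        have hkj : q - n = j := by omega
        have hij2 : j < i := by
          rcases lt_or_ge i j with h | h
          · exfalso; rw [hkj] at hik; omega
          · omega
        have hp2 : ((q - n:ℕ):ℝ) + 1 ≤ (i:ℝ) := by rw [hkj]; exact_mod_cast hij2
        have hp3 : (((q - n:ℕ):ℝ) + 1) * gam n ≤ (i:ℝ) * gam n :=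
          mul_le_mul_of_nonneg_right hp2 hγ.le
        rw [if_pos hqj]
        exact sameUI01 (by linarith) (by linarith) (by linarith) (by linarith)
      · rw [if_neg hqj]
        exact sameUI01 (by linarith) (by linarith) (by linarith) (by linarith)
  · -- i > n : reset at an earlier suffix event; value in (0,1)
    have hiv : timeOf n i = 1 - eta n + (i - n : ℕ) * gam n := timeOf_suffix n hin
    have hp : (((i - n : ℕ):ℝ) + 1) * gam n ≤ ((q - n : ℕ):ℝ) * gam n :=
      mul_le_mul_of_nonneg_right (by exact_mod_cast (by omega : (i - n) + 1 ≤ q - n)) hγ.le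
    have hibound : ((i - n:ℕ):ℝ) * gam n ≤ (n:ℝ) * gam n := nat_mul_gam_le n (by omega)
    have hipos : (0:ℝ) ≤ ((i - n:ℕ):ℝ) * gam n := by positivity
    unfold timeOf'
    rw [hq, hiv]
    rcases eq_or_ne q (n+j) with hqj | hqj
    · have hij2 : i ≠ n + j := by omega
      rw [if_pos hqj, if_neg hij2]
      exact sameUI01 (by linarith) (by linarith) (by linarith) (by linarith)
    · rw [if_neg hqj]
      rcases eq_or_ne i (n+j) with hij2 | hij2
      · rw [if_pos hij2]
        have hji : (i - n : ℕ) = j := by omega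
        have hji2 : ((i - n : ℕ):ℝ) = (j:ℝ) := by rw [hji]
        rw [hji2] at hp hibound hipos ⊢
        exact sameUI01 (by linarith) (by linarith) (by linarith) (by linarith)
      · rw [if_neg hij2]
        exact sameUI01 (by linarith) (by linarith) (by linarith) (by linarith)

end Construction

end Part1

namespace NTARun

lemma runReach_trans {A C Q : Type} (N : NTA A C Q) :
    ∀ (u w : TimedWord A) (q : Q) (v : C → NNReal) rs1 rs2 q' v' q'' v'',
    RunReach N u q v rs1 q' v' → RunReach N w q' v' rs2 q'' v'' →
    RunReach N (u ++ w) q v (rs1 ++ rs2) q'' v'' := by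
  intro u
  induction u with
  | nil =>
    intro w q v rs1 rs2 q' v' q'' v'' hr1 hr2
    cases rs1 with
    | nil => obtain ⟨rfl, rfl⟩ := hr1; exact hr2
    | cons ρ rs => exact absurd hr1 (by simp [RunReach])
  | cons e u ih =>
    obtain ⟨a, t⟩ := e
    intro w q v rs1 rs2 q' v' q'' v'' hr1 hr2
    cases rs1 with
    | nil => exact absurd hr1 (by simp [RunReach])
    | cons ρ rs =>
      obtain ⟨hm, hsrc, hl, hs, h⟩ := hr1
      exact ⟨hm, hsrc, hl, hs, ih w _ _ rs rs2 _ _ _ _ h hr2⟩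

end NTARun

namespace Part1

lemma compatAux {C : Type} (n j : ℕ) (hn : 1 ≤ n) (hj1 : 1 ≤ j) (hjn : j ≤ n) :
    ∀ (cnt p : ℕ), p + cnt = 2*n → n + j ≤ p + 1 →
    ∀ (v v' : C → NNReal),
    (∀ x, ∃ i, i ≤ p ∧ i ≠ j ∧ (v x:ℝ) = timeOf n p - timeOf n i ∧
      (v' x:ℝ) = timeOf' n j p - timeOf' n j i) →
    Compat (mkW (timeOf n) cnt p) (mkW (timeOf' n j) cnt p) v v' := by
  intro cnt
  induction cnt with
  | zero => intro p _ _ v v' _; simp [Compat]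
  | succ cnt ih =>
    intro p hp1 hp2 v v' Hv
    rw [mkW_succ, mkW_succ]
    have hd : (0:ℝ) ≤ timeOf n (p+1) - timeOf n p := sub_nonneg.mpr (timeOf_step n p).le
    have hd' : (0:ℝ) ≤ timeOf' n j (p+1) - timeOf' n j p :=
      sub_nonneg.mpr (timeOf'_step n j hj1 p).le
    constructor
    · intro x
      obtain ⟨i, hip, hij, hv, hv'⟩ := Hv x
      have e1 : (v x:ℝ) + (Real.toNNReal (timeOf n (p+1) - timeOf n p) : ℝ) =
          timeOf n (p+1) - timeOf n i := by
        rw [Real.coe_toNNReal _ hd, hv]; ring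
      have e2 : (v' x:ℝ) + (Real.toNNReal (timeOf' n j (p+1) - timeOf' n j p) : ℝ) =
          timeOf' n j (p+1) - timeOf' n j i := by
        rw [Real.coe_toNNReal _ hd', hv']; ring
      rw [e1, e2]
      exact keySameUI n j i (p+1) hn hj1 hjn (by omega) (by omega) (by omega) hij
    · intro rset
      apply ih (p+1) (by omega) (by omega)
      intro x
      by_cases hx : x ∈ rset
      · refine ⟨p+1, le_rfl, by omega, ?_, ?_⟩
        · rw [resetVal_mem _ _ hx]; simp
        · rw [resetVal_mem _ _ hx]; simp
      · obtain ⟨i, hip, hij, hv, hv'⟩ := Hv x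
        refine ⟨i, by omega, hij, ?_, ?_⟩
        · rw [resetVal_not_mem _ _ hx]
          push_cast
          rw [Real.coe_toNNReal _ hd, hv]; ring
        · rw [resetVal_not_mem _ _ hx]
          push_cast
          rw [Real.coe_toNNReal _ hd', hv']; ring

lemma noPairTime (n : ℕ) (hn : 1 ≤ n) :
    ∀ i k, 1 ≤ i → i < k → k ≤ 2*n → timeOf n k - timeOf n i ≠ 1 := by
  intro i k hi hik hk
  have hγ := gam_pos n
  have hη := eta_pos n
  have hηγ := eta_lt n
  have hs := gam_sum n
  rcases le_or_gt k n with hkn | hkn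
  · -- both prefix
    rw [timeOf_prefix n hkn, timeOf_prefix n (by omega)]
    have h1 : (k:ℝ) * gam n ≤ (n:ℝ) * gam n := nat_mul_gam_le n hkn
    have h2 : (0:ℝ) ≤ (i:ℝ) * gam n := by positivity
    intro hEq; linarith
  · rcases le_or_gt i n with hin | hin
    · -- cross pair : parity contradiction
      rw [timeOf_suffix n hkn, timeOf_prefix n hin]
      intro hEq
      have hE2 : ((k - n : ℕ):ℝ) * gam n - (i:ℝ) * gam n = eta n := by linarith
      have hE3 : (((k - n : ℕ):ℝ) - (i:ℝ) - 1/2) * gam n = 0 := by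
        unfold eta at hE2; ring_nf; ring_nf at hE2; linarith
      have hE4 : ((k - n : ℕ):ℝ) - (i:ℝ) - 1/2 = 0 := by
        rcases mul_eq_zero.mp hE3 with h | h
        · exact h
        · exact absurd h (ne_of_gt hγ)
      have hE5 : 2 * ((k - n : ℕ):ℝ) = 2 * (i:ℝ) + 1 := by linarith
      have hE6 : (2 * (k - n) : ℕ) = 2 * i + 1 := by exact_mod_cast hE5
      omega
    · -- both suffix
      rw [timeOf_suffix n hkn, timeOf_suffix n hin]
      have h1 : ((k - n : ℕ):ℝ) * gam n ≤ (n:ℝ) * gam n := nat_mul_gam_le n (by omega)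
      have h2 : (0:ℝ) ≤ ((i - n : ℕ):ℝ) * gam n := by positivity
      intro hEq; linarith

theorem part1_sep (C Q' : Type) (hC : Fintype C) (hQ' : Fintype Q') (N : NTA Unit C Q') :
    N.lang ≠ M1.lang := by
  classical
  intro hN
  set n := Fintype.card C + 1 with hndef
  have hn : 1 ≤ n := by omega
  have hγ := gam_pos n
  have hη := eta_pos n
  have hηγ := eta_lt n
  have hsum := gam_sum n
  set W := mkW (timeOf n) (2*n) 0 with hW
  have hmono : ∀ a cnt, ∀ i, a ≤ i → i < a + cnt → timeOf n i ≤ timeOf n (i+1) :=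
    fun a cnt i _ _ => (timeOf_step n i).le
  have hmono' : ∀ a cnt, ∀ i, a ≤ i → i < a + cnt → timeOf n i < timeOf n (i+1) :=
    fun a cnt i _ _ => timeOf_step n i
  -- W ∈ M1.lang
  have hWlang : W ∈ M1.lang := by
    rw [M1_lang]
    intro i k hi hik hk
    rw [hW, mkW_length] at hk
    rw [hW, TS_mkW (timeOf n) k (2*n) 0 hk (hmono 0 (2*n)),
      TS_mkW (timeOf n) i (2*n) 0 (by omega) (hmono 0 (2*n))]
    simp only [Nat.zero_add, timeOf_zero, sub_zero]
    have := noPairTime n hn i k hi hik hk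
    intro hc; apply this; linarith
  have hWN : W ∈ N.lang := by rw [hN]; exact hWlang
  obtain ⟨rs, hrs⟩ := (NTARun.accFrom_iff_runAcc N W _ _).1 hWN
  have hsplitW : W = mkW (timeOf n) n 0 ++ mkW (timeOf n) n n := by
    rw [hW, two_mul, mkW_append (timeOf n) n n 0]
    norm_num
  rw [hsplitW] at hrs
  obtain ⟨rs1, rs2, q1, v1, hrseq, hreach1, hacc2⟩ := NTARun.runAcc_split N _ _ _ _ _ hrs
  -- every j ∈ [1,n] is remembered at the end of the prefix
  have hremember : ∀ j, 1 ≤ j → j ≤ n → ∃ x, (v1 x : ℝ) = timeOf n n - timeOf n j := by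
    intro j hj1 hjn
    by_contra hforget
    push_neg at hforget
    set p := n + j - 1 with hpdef
    have hsplitS : mkW (timeOf n) n n = mkW (timeOf n) (j-1) n ++ mkW (timeOf n) (n-j+1) p := by
      have h0 := mkW_append (timeOf n) (j-1) (n-j+1) n
      rw [show (j-1) + (n-j+1) = n from by omega, show n + (j-1) = p from by omega] at h0
      exact h0
    rw [hsplitS] at hacc2
    obtain ⟨rs3, rs4, q2, v2, hrseq2, hreach2, hacc3⟩ := NTARun.runAcc_split N _ _ _ _ _ hacc2
    -- the composed reach over the first p events
    have hcomp0 : mkW (timeOf n) n 0 ++ mkW (timeOf n) (j-1) n = mkW (timeOf n) p 0 := by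
      have h0 := mkW_append (timeOf n) n (j-1) 0
      rw [show n + (j-1) = p from by omega] at h0
      rw [h0]
      norm_num
    have hreach12 : NTARun.RunReach N (mkW (timeOf n) p 0) N.init (fun _ => 0)
        (rs1 ++ rs3) q2 v2 := by
      rw [← hcomp0]
      exact NTARun.runReach_trans N _ _ _ _ _ _ _ _ _ _ hreach1 hreach2
    -- the form of the valuation at position p
    have hform : ∀ x, ∃ i, i ≤ p ∧ i ≠ j ∧ (v2 x:ℝ) = timeOf n p - timeOf n i ∧
        (v2 x:ℝ) = timeOf' n j p - timeOf' n j i := by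
      intro x
      have hSD : NTARun.SD (mkW (timeOf n) p 0) = timeOf n p := by
        rw [SD_mkW (timeOf n) p 0 (hmono 0 p)]
        simp [timeOf_zero]
      have hiprim : ∀ i, i ≤ p → timeOf' n j i = timeOf n i := by
        intro i hi
        unfold timeOf'
        rw [if_neg (by omega)]; ring
      rcases NTARun.reach_form N _ _ _ _ _ _ hreach12 x with h1 | ⟨k, hk1, hk2, h1⟩
      · refine ⟨0, by omega, by omega, ?_, ?_⟩
        · rw [h1, hSD]; simp [timeOf_zero]
        · rw [h1, hSD, hiprim 0 (by omega), hiprim p le_rfl]; simp [timeOf_zero]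
      · rw [mkW_length] at hk2
        have hTSk : TS (mkW (timeOf n) p 0) k = timeOf n k := by
          rw [TS_mkW (timeOf n) k p 0 hk2 (hmono 0 p)]
          simp [timeOf_zero]
        have hkj : k ≠ j := by
          intro hkj
          apply hforget x
          rw [← hkj]
          have hkn2 : k ≤ n := by omega
          have hs0 : (0:ℝ) ≤ timeOf n n - timeOf n k := by
            rcases lt_or_eq_of_le hkn2 with h | h
            · linarith [timeOf_mono n h]
            · rw [h]; linarith
          apply NTARun.reach_back N _ _ _ _ _ _ hreach2
            (mkW_pos (timeOf n) (j-1) n (hmono' n (j-1))) x _ hs0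
          rw [h1, hSD, hTSk, SD_mkW (timeOf n) (j-1) n (hmono n (j-1)),
            show n + (j-1) = p from by omega]
          ring
        refine ⟨k, by omega, hkj, ?_, ?_⟩
        · rw [h1, hSD, hTSk]
        · rw [h1, hSD, hTSk, hiprim k (by omega), hiprim p le_rfl]
    -- transfer acceptance to the perturbed word
    have hcompat : Compat (mkW (timeOf n) (n-j+1) p) (mkW (timeOf' n j) (n-j+1) p) v2 v2 :=
      compatAux n j hn hj1 hjn (n-j+1) p (by omega) (by omega) v2 v2 hform
    have hacc4 := transfer N _ _ _ _ _ _ hacc3 hcompat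
    -- reassemble the perturbed word
    set W' := mkW (timeOf' n j) (2*n) 0 with hW'
    have hsplitW' : W' = mkW (timeOf n) p 0 ++ mkW (timeOf' n j) (n-j+1) p := by
      rw [hW']
      have h1 : 2*n = p + (n-j+1) := by omega
      rw [h1, mkW_append (timeOf' n j) p (n-j+1) 0]
      congr 1
      · apply mkW_congr
        intro i h1 h2
        unfold timeOf'
        rw [if_neg (by omega)]; ring
      · congr 1; omega
    have hacc5 : NTARun.RunAcc N W' N.init (fun _ => 0) ((rs1 ++ rs3) ++ rs4) := by
      rw [hsplitW']
      exact NTARun.runReach_comp_acc N _ _ _ _ _ _ _ _ hreach12 hacc4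
    have hW'N : W' ∈ N.lang := (NTARun.accFrom_iff_runAcc N W' _ _).2 ⟨_, hacc5⟩
    have hW'lang : W' ∈ M1.lang := by rw [← hN]; exact hW'N
    rw [M1_lang] at hW'lang
    -- but W' has the pair (j, n+j) at distance exactly 1
    have hmono'' : ∀ i, 0 ≤ i → i < 0 + 2*n → timeOf' n j i ≤ timeOf' n j (i+1) :=
      fun i _ _ => (timeOf'_step n j hj1 i).le
    have hpair := hW'lang j (n+j) hj1 (by omega) (by rw [hW', mkW_length]; omega)
    apply hpair
    rw [hW', TS_mkW (timeOf' n j) (n+j) (2*n) 0 (by omega) hmono'',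
      TS_mkW (timeOf' n j) j (2*n) 0 (by omega) hmono'']
    simp only [Nat.zero_add]
    have h1 : timeOf' n j (n+j) = 1 + (j:ℝ) * gam n := by
      unfold timeOf'
      rw [if_pos rfl, timeOf_suffix n (by omega)]
      have : (n + j - n : ℕ) = j := by omega
      rw [this]
      unfold eta; ring
    have h2 : timeOf' n j j = (j:ℝ) * gam n := by
      unfold timeOf'
      rw [if_neg (by omega), timeOf_prefix n hjn]
      ring
    have h3 : timeOf' n j 0 = 0 := by
      unfold timeOf'
      rw [if_neg (by omega), timeOf_zero]
      ring
    rw [h1, h2, h3]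
    ring
  -- pigeonhole: n distinct clocks
  have hone := hremember 1 le_rfl hn
  let G : ℕ → C := fun j => if h : 1 ≤ j ∧ j ≤ n then (hremember j h.1 h.2).choose
    else hone.choose
  have hG : ∀ j, 1 ≤ j → j ≤ n → (v1 (G j) : ℝ) = timeOf n n - timeOf n j := by
    intro j h1 h2
    simp only [G, dif_pos (show 1 ≤ j ∧ j ≤ n from ⟨h1, h2⟩)]
    exact (hremember j h1 h2).choose_spec
  have hcard : (Finset.univ : Finset C).card < (Finset.Icc 1 n).card := by
    rw [Nat.card_Icc]
    simp [hndef]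
  obtain ⟨j, hj, j', hj', hne, heq⟩ :=
    Finset.exists_ne_map_eq_of_card_lt_of_maps_to hcard (fun j _ => Finset.mem_univ (G j))
  apply hne
  rw [Finset.mem_Icc] at hj hj'
  have e1 := hG j hj.1 hj.2
  have e2 := hG j' hj'.1 hj'.2
  rw [heq] at e1
  have : timeOf n j = timeOf n j' := by linarith
  exact (timeOf_mono n).injective this

end Part1
/-! ### Part 2: zones, schedule and class machinery -/

namespace Part2

inductive Zone : Type where
  | A : Zone
  | M : Zone
  | B : Zone
deriving DecidableEq

open Zone

noncomputable def base : Zone → ℝ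
  | A => 1
  | M => 5/4
  | B => 3/2

lemma base_ge_one (z : Zone) : 1 ≤ base z := by cases z <;> norm_num [base]
lemma base_le (z : Zone) : base z ≤ 3/2 := by cases z <;> norm_num [base]

/-- next event time, strictly inside `(base z, base z + 1/4)` and after `T`. -/
noncomputable def nxt (z : Zone) (T : ℝ) : ℝ := (max T (base z) + (base z + 1/4)) / 2

lemma nxt_gt_base {z : Zone} {T : ℝ} (h : T < base z + 1/4) : base z < nxt z T := by
  unfold nxt
  have := le_max_right T (base z)
  linarith

lemma nxt_lt {z : Zone} {T : ℝ} (h : T < base z + 1/4) : nxt z T < base z + 1/4 := by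
  unfold nxt
  have : max T (base z) < base z + 1/4 := max_lt h (by linarith)
  linarith

lemma nxt_gt_T {z : Zone} {T : ℝ} (h : T < base z + 1/4) : T < nxt z T := by
  unfold nxt
  have := le_max_left T (base z)
  have := le_max_right T (base z)
  have : max T (base z) < base z + 1/4 := max_lt h (by linarith)
  rcases max_cases T (base z) with ⟨h1, h2⟩ | ⟨h1, h2⟩ <;> linarith

/-- concrete scheduling of a list of zones starting at time `T`. -/
noncomputable def mkC : List Zone → ℝ → TimedWord Unit
  | [], _ => []
  | z :: zs, T => ((), Real.toNNReal (nxt z T - T)) :: mkC zs (nxt z T)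

lemma mkC_nil (T : ℝ) : mkC [] T = [] := rfl
lemma mkC_cons (z : Zone) (zs : List Zone) (T : ℝ) :
    mkC (z :: zs) T = ((), Real.toNNReal (nxt z T - T)) :: mkC zs (nxt z T) := rfl

/-- abstract clock classes: never reset, reset at the first event, reset at the
second event, reset in the cloud. -/
inductive Cl : Type where
  | c0 : Cl
  | c1 : Cl
  | c2 : Cl
  | cl : Cl
deriving DecidableEq

open Cl

/-- region of a class at a zone: `true` means the clock value lies in `(1,2)`,
`false` means it lies in `(0,1)`. -/
def creg : Cl → Zone → Bool
  | c0, _ => true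
  | c1, A => false
  | c1, _ => true
  | c2, B => true
  | c2, _ => false
  | cl, _ => false

/-- representative clock value for a region. -/
noncomputable def repv (b : Bool) : NNReal := if b then 3/2 else 1/2

/-- the concrete clock-value invariant of each class. -/
def ClVal (c : Cl) (T : ℝ) (u : NNReal) : Prop :=
  match c with
  | c0 => (u:ℝ) = T
  | c1 => (u:ℝ) = T - 1/4
  | c2 => (u:ℝ) = T - 1/2
  | cl => ∃ r : ℝ, 1 < r ∧ r ≤ T ∧ (u:ℝ) = T - r

lemma clval_region {c : Cl} {z : Zone} {T : ℝ} {u : NNReal} (hv : ClVal c T u)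
    (hT1 : 1/2 ≤ T) (hT : T < base z + 1/4) :
    SameUI ((u:ℝ) + (nxt z T - T)) (repv (creg c z)) := by
  have h1 := nxt_gt_base hT
  have h2 := nxt_lt hT
  have h3 := nxt_gt_T hT
  have h4 := base_ge_one z
  have h5 := base_le z
  cases c with
  | c0 =>
    have : (u:ℝ) + (nxt z T - T) = nxt z T := by rw [hv]; ring
    rw [this]
    cases z <;>
      (refine Part1.sameUI12 ?_ ?_ ?_ ?_ <;> simp [repv, creg, base] at * <;> norm_num <;> linarith)
  | c1 =>
    have hval : (u:ℝ) + (nxt z T - T) = nxt z T - 1/4 := by rw [hv]; ring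
    rw [hval]
    cases z
    · refine Part1.sameUI01 ?_ ?_ ?_ ?_ <;> simp [repv, creg, base] at * <;> norm_num <;> linarith
    · refine Part1.sameUI12 ?_ ?_ ?_ ?_ <;> simp [repv, creg, base] at * <;> norm_num <;> linarith
    · refine Part1.sameUI12 ?_ ?_ ?_ ?_ <;> simp [repv, creg, base] at * <;> norm_num <;> linarith
  | c2 =>
    have hval : (u:ℝ) + (nxt z T - T) = nxt z T - 1/2 := by rw [hv]; ring
    rw [hval]
    cases z
    · refine Part1.sameUI01 ?_ ?_ ?_ ?_ <;> simp [repv, creg, base] at * <;> norm_num <;> linarith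
    · refine Part1.sameUI01 ?_ ?_ ?_ ?_ <;> simp [repv, creg, base] at * <;> norm_num <;> linarith
    · refine Part1.sameUI12 ?_ ?_ ?_ ?_ <;> simp [repv, creg, base] at * <;> norm_num <;> linarith
  | cl =>
    obtain ⟨r, hr1, hr2, hr3⟩ := hv
    have hval : (u:ℝ) + (nxt z T - T) = nxt z T - r := by rw [hr3]; ring
    rw [hval]
    cases z <;>
      (refine Part1.sameUI01 ?_ ?_ ?_ ?_ <;> simp [repv, creg, base] at * <;> norm_num <;> linarith)

lemma clval_shift {c : Cl} {z : Zone} {T : ℝ} {u : NNReal} (hv : ClVal c T u)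
    (hT : T < base z + 1/4) :
    ClVal c (nxt z T) (u + Real.toNNReal (nxt z T - T)) := by
  have h3 := nxt_gt_T hT
  have hco : ((u + Real.toNNReal (nxt z T - T) : NNReal) : ℝ) = (u:ℝ) + (nxt z T - T) := by
    push_cast
    rw [Real.coe_toNNReal _ (by linarith)]
  cases c with
  | c0 => show ((_ : NNReal):ℝ) = _; rw [hco, hv]; ring
  | c1 => show ((_ : NNReal):ℝ) = _; rw [hco, hv]; ring
  | c2 => show ((_ : NNReal):ℝ) = _; rw [hco, hv]; ring
  | cl =>
    obtain ⟨r, hr1, hr2, hr3⟩ := hv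
    exact ⟨r, hr1, by linarith, by rw [hco, hr3]; ring⟩

lemma clval_reset {z : Zone} {T : ℝ} (hT : T < base z + 1/4) :
    ClVal Cl.cl (nxt z T) 0 := by
  have h1 := nxt_gt_base hT
  have h4 := base_ge_one z
  exact ⟨nxt z T, by linarith, le_rfl, by simp⟩

lemma repv_mem (b : Bool) : SameUI (repv b) (repv b) := by
  cases b
  · exact Part1.sameUI01 (by norm_num [repv]) (by norm_num [repv]) (by norm_num [repv])
      (by norm_num [repv])
  · exact Part1.sameUI12 (by norm_num [repv]) (by norm_num [repv]) (by norm_num [repv])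
      (by norm_num [repv])

end Part2

namespace Part2

open Cl

variable {Q' : Type} (M : ATA Unit (Fin 1) Q')

open Classical in
/-- abstract one-step transition of the one-clock ATA on a zone letter. -/
noncomputable def stepz (z : Zone) (g : Q' → Cl → Prop) : Q' → Cl → Prop :=
  fun q c => ∃ gb ∈ M.trans q (), gb.1.sat (fun _ => repv (creg c z)) ∧
    gb.2.eval (fun qr => g qr.1 (if (0 : Fin 1) ∈ qr.2 then Cl.cl else c))

def endV : Q' → Cl → Prop := fun q _ => q ∈ M.accept

noncomputable def vecOf (zs : List Zone) : Q' → Cl → Prop :=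
  zs.foldr (fun z g => stepz M z g) (endV M)

lemma vecOf_nil : vecOf M [] = endV M := rfl
lemma vecOf_cons (z : Zone) (zs : List Zone) :
    vecOf M (z :: zs) = stepz M z (vecOf M zs) := rfl

/-- The bridge between concrete acceptance on scheduled words and the abstract
vector semantics. -/
lemma bridge : ∀ (zs : List Zone) (T : ℝ),
    List.Pairwise (fun a b => base a ≤ base b) zs →
    1/2 ≤ T → (∀ z ∈ zs, T < base z + 1/4) →
    ∀ (q : Q') (c : Cl) (v : Fin 1 → NNReal), ClVal c T (v 0) →
    (M.AccFrom (mkC zs T) q v ↔ vecOf M zs q c) := by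
  classical
  intro zs
  induction zs with
  | nil =>
    intro T _ _ _ q c v _
    rw [mkC_nil, vecOf_nil]
    exact Iff.rfl
  | cons z zs ih =>
    intro T hpair hT1 hT2 q c v hv
    have hTz : T < base z + 1/4 := hT2 z (by simp)
    have hb := base_ge_one z
    have hnb := nxt_gt_base hTz
    have hnl := nxt_lt hTz
    have hnT := nxt_gt_T hTz
    have hd0 : (0:ℝ) ≤ nxt z T - T := by linarith
    rw [mkC_cons, vecOf_cons]
    have hvx : ∀ x : Fin 1, v x = v 0 := fun x => by rw [Subsingleton.elim x 0]
    -- satisfaction transfer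
    have hsat : ∀ gb : ClockConstraint (Fin 1) × PosBool (Q' × Set (Fin 1)),
        (gb.1.sat (fun x => v x + Real.toNNReal (nxt z T - T)) ↔
          gb.1.sat (fun _ => repv (creg c z))) := by
      intro gb
      apply ClockConstraint.sat_congr
      intro x
      have h1 : ((v x + Real.toNNReal (nxt z T - T) : NNReal) : ℝ) =
          (v 0 : ℝ) + (nxt z T - T) := by
        rw [hvx x]; push_cast; rw [Real.coe_toNNReal _ hd0]
      rw [h1]
      exact clval_region hv hT1 hTz
    -- inner acceptance transfer
    have hin : ∀ (q'' : Q') (rset : Set (Fin 1)),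
        (M.AccFrom (mkC zs (nxt z T)) q''
          (resetVal (fun x => v x + Real.toNNReal (nxt z T - T)) rset) ↔
          vecOf M zs q'' (if (0 : Fin 1) ∈ rset then Cl.cl else c)) := by
      intro q'' rset
      have hT1' : 1/2 ≤ nxt z T := by linarith
      have hT2' : ∀ z' ∈ zs, nxt z T < base z' + 1/4 := by
        intro z' hz'
        have : base z ≤ base z' := (List.pairwise_cons.mp hpair).1 z' hz'
        linarith
      apply ih (nxt z T) (List.pairwise_cons.mp hpair).2 hT1' hT2' q''
      by_cases h0 : (0 : Fin 1) ∈ rset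
      · rw [if_pos h0, resetVal_mem _ _ h0]
        exact clval_reset hTz
      · rw [if_neg h0, resetVal_not_mem _ _ h0]
        exact clval_shift hv hTz
    show (∃ gb ∈ M.trans q (), _ ∧ _) ↔ _
    constructor
    · rintro ⟨gb, hm, hs, he⟩
      refine ⟨gb, hm, (hsat gb).1 hs, ?_⟩
      refine (PosBool.eval_congr _ _ _ (fun qr => ?_)).1 he
      exact hin qr.1 qr.2
    · rintro ⟨gb, hm, hs, he⟩
      refine ⟨gb, hm, (hsat gb).2 hs, ?_⟩
      refine (PosBool.eval_congr _ _ _ (fun qr => ?_)).2 he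
      exact hin qr.1 qr.2

end Part2

namespace Part2

open Cl Zone

variable {Q' : Type} (M : ATA Unit (Fin 1) Q')

open Classical in
noncomputable def colStep (b : Bool) (gc gl : Q' → Prop) : Q' → Prop :=
  fun q => ∃ gb ∈ M.trans q (), gb.1.sat (fun _ => repv b) ∧
    gb.2.eval (fun qr => if (0 : Fin 1) ∈ qr.2 then gl qr.1 else gc qr.1)

noncomputable def clStep (gl : Q' → Prop) : Q' → Prop := colStep M false gl gl

noncomputable def Ftrue (x : (Q' → Prop) × (Q' → Prop)) : (Q' → Prop) × (Q' → Prop) :=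
  (colStep M true x.1 x.2, clStep M x.2)

noncomputable def Ffalse (x : (Q' → Prop) × (Q' → Prop)) : (Q' → Prop) × (Q' → Prop) :=
  (colStep M false x.1 x.2, clStep M x.2)

def endCol : Q' → Prop := fun q => q ∈ M.accept

open Classical in
lemma stepz_eq (z : Zone) (g : Q' → Cl → Prop) (q : Q') (c : Cl) :
    stepz M z g q c =
      colStep M (creg c z) (fun q' => g q' c) (fun q' => g q' Cl.cl) q := by
  have h : (fun qr : Q' × Set (Fin 1) => g qr.1 (if (0:Fin 1) ∈ qr.2 then Cl.cl else c)) =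
      (fun qr : Q' × Set (Fin 1) =>
        if (0:Fin 1) ∈ qr.2 then g qr.1 Cl.cl else g qr.1 c) := by
    funext qr
    by_cases h0 : (0:Fin 1) ∈ qr.2 <;> simp [h0]
  unfold stepz colStep
  rw [h]

lemma snd_Ftrue : ∀ (k : ℕ) (x : (Q' → Prop) × (Q' → Prop)),
    ((Ftrue M)^[k] x).2 = (clStep M)^[k] x.2 := by
  intro k
  induction k with
  | zero => intro x; simp
  | succ k ih =>
    intro x
    rw [Function.iterate_succ_apply', Function.iterate_succ_apply']
    rw [show ((Ftrue M) ((Ftrue M)^[k] x)).2 = clStep M (((Ftrue M)^[k] x).2) from rfl, ih]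

lemma snd_Ffalse : ∀ (k : ℕ) (x : (Q' → Prop) × (Q' → Prop)),
    ((Ffalse M)^[k] x).2 = (clStep M)^[k] x.2 := by
  intro k
  induction k with
  | zero => intro x; simp
  | succ k ih =>
    intro x
    rw [Function.iterate_succ_apply', Function.iterate_succ_apply']
    rw [show ((Ffalse M) ((Ffalse M)^[k] x)).2 = clStep M (((Ffalse M)^[k] x).2) from rfl, ih]

noncomputable def absVec (p m q : ℕ) : Q' → Cl → Prop := fun q' c =>
  match c with
  | Cl.cl => (clStep M)^[p+m+q] (endCol M) q'
  | Cl.c0 => ((Ftrue M)^[p+m+q] (endCol M, endCol M)).1 q'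
  | Cl.c1 => ((Ffalse M)^[p] ((Ftrue M)^[m+q] (endCol M, endCol M))).1 q'
  | Cl.c2 => ((Ffalse M)^[p+m] ((Ftrue M)^[q] (endCol M, endCol M))).1 q'

def zList (p m q : ℕ) : List Zone :=
  List.replicate p Zone.A ++ (List.replicate m Zone.M ++ List.replicate q Zone.B)

lemma fst_succ_true (k : ℕ) (x : (Q' → Prop) × (Q' → Prop)) :
    colStep M true (((Ftrue M)^[k] x).1) (((Ftrue M)^[k] x).2) = ((Ftrue M)^[k+1] x).1 := by
  rw [Function.iterate_succ_apply']; rfl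

lemma fst_succ_false (k : ℕ) (x : (Q' → Prop) × (Q' → Prop)) :
    colStep M false (((Ffalse M)^[k] x).1) (((Ffalse M)^[k] x).2) = ((Ffalse M)^[k+1] x).1 := by
  rw [Function.iterate_succ_apply']; rfl

lemma cl_succ (k : ℕ) (x : Q' → Prop) :
    clStep M ((clStep M)^[k] x) = (clStep M)^[k+1] x :=
  (Function.iterate_succ_apply' _ _ _).symm

lemma vec_decomp : ∀ p m q : ℕ, vecOf M (zList p m q) = absVec M p m q := by
  have hE : ((endCol M, endCol M) : (Q' → Prop) × (Q' → Prop)).2 = endCol M := rfl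
  intro p
  induction p with
  | succ p ihp =>
    intro m q
    have hz : zList (p+1) m q = Zone.A :: zList p m q := by
      simp [zList, List.replicate_succ]
    rw [hz, vecOf_cons, ihp]
    funext q' c
    rw [stepz_eq]
    cases c
    · -- c0
      show colStep M true (((Ftrue M)^[p+m+q] (endCol M, endCol M)).1)
        ((clStep M)^[p+m+q] (endCol M)) q' = _
      rw [show (clStep M)^[p+m+q] (endCol M) =
          ((Ftrue M)^[p+m+q] (endCol M, endCol M)).2 from by rw [snd_Ftrue]]
      rw [fst_succ_true, show (p+m+q)+1 = (p+1)+m+q from by omega]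
      rfl
    · -- c1 : creg c1 A = false
      show colStep M false (((Ffalse M)^[p] ((Ftrue M)^[m+q] (endCol M, endCol M))).1)
        ((clStep M)^[p+m+q] (endCol M)) q' = _
      rw [show (clStep M)^[p+m+q] (endCol M) =
          ((Ffalse M)^[p] ((Ftrue M)^[m+q] (endCol M, endCol M))).2 from by
        rw [snd_Ffalse, snd_Ftrue, hE, ← Function.iterate_add_apply,
          show p+(m+q) = p+m+q from by omega]]
      rw [fst_succ_false]
      rfl
    · -- c2 : creg c2 A = false
      show colStep M false (((Ffalse M)^[p+m] ((Ftrue M)^[q] (endCol M, endCol M))).1)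
        ((clStep M)^[p+m+q] (endCol M)) q' = _
      rw [show (clStep M)^[p+m+q] (endCol M) =
          ((Ffalse M)^[p+m] ((Ftrue M)^[q] (endCol M, endCol M))).2 from by
        rw [snd_Ffalse, snd_Ftrue, hE, ← Function.iterate_add_apply,
          show (p+m)+q = p+m+q from by omega]]
      rw [fst_succ_false, show (p+m)+1 = (p+1)+m from by omega]
      rfl
    · -- cl
      show colStep M false ((clStep M)^[p+m+q] (endCol M))
        ((clStep M)^[p+m+q] (endCol M)) q' = _
      rw [show colStep M false ((clStep M)^[p+m+q] (endCol M))
          ((clStep M)^[p+m+q] (endCol M)) = clStep M ((clStep M)^[p+m+q] (endCol M)) from rfl]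
      rw [cl_succ, show (p+m+q)+1 = (p+1)+m+q from by omega]
      rfl
  | zero =>
    intro m
    induction m with
    | succ m ihm =>
      intro q
      have hz : zList 0 (m+1) q = Zone.M :: zList 0 m q := by
        simp [zList, List.replicate_succ]
      rw [hz, vecOf_cons, ihm]
      funext q' c
      rw [stepz_eq]
      cases c
      · -- c0 : creg c0 M = true
        show colStep M true (((Ftrue M)^[0+m+q] (endCol M, endCol M)).1)
          ((clStep M)^[0+m+q] (endCol M)) q' = _
        rw [show (clStep M)^[0+m+q] (endCol M) =
            ((Ftrue M)^[0+m+q] (endCol M, endCol M)).2 from by rw [snd_Ftrue]]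
        rw [fst_succ_true, show (0+m+q)+1 = 0+(m+1)+q from by omega]
        rfl
      · -- c1 : creg c1 M = true
        show colStep M true (((Ffalse M)^[0] ((Ftrue M)^[m+q] (endCol M, endCol M))).1)
          ((clStep M)^[0+m+q] (endCol M)) q' = _
        rw [show ((Ffalse M)^[0] ((Ftrue M)^[m+q] (endCol M, endCol M))) =
            (Ftrue M)^[m+q] (endCol M, endCol M) from rfl]
        rw [show (clStep M)^[0+m+q] (endCol M) =
            ((Ftrue M)^[m+q] (endCol M, endCol M)).2 from by
          rw [snd_Ftrue, hE, show 0+m+q = m+q from by omega]]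
        rw [fst_succ_true, show (m+q)+1 = (m+1)+q from by omega]
        rfl
      · -- c2 : creg c2 M = false
        show colStep M false (((Ffalse M)^[0+m] ((Ftrue M)^[q] (endCol M, endCol M))).1)
          ((clStep M)^[0+m+q] (endCol M)) q' = _
        rw [show (clStep M)^[0+m+q] (endCol M) =
            ((Ffalse M)^[0+m] ((Ftrue M)^[q] (endCol M, endCol M))).2 from by
          rw [snd_Ffalse, snd_Ftrue, hE, ← Function.iterate_add_apply,
            show (0+m)+q = 0+m+q from by omega]]
        rw [fst_succ_false, show (0+m)+1 = 0+(m+1) from by omega]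
        rfl
      · -- cl
        show colStep M false ((clStep M)^[0+m+q] (endCol M))
          ((clStep M)^[0+m+q] (endCol M)) q' = _
        rw [show colStep M false ((clStep M)^[0+m+q] (endCol M))
            ((clStep M)^[0+m+q] (endCol M)) = clStep M ((clStep M)^[0+m+q] (endCol M)) from rfl]
        rw [cl_succ, show (0+m+q)+1 = 0+(m+1)+q from by omega]
        rfl
    | zero =>
      intro q
      induction q with
      | succ q ihq =>
        have hz : zList 0 0 (q+1) = Zone.B :: zList 0 0 q := by
          simp [zList, List.replicate_succ]
        rw [hz, vecOf_cons, ihq]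
        funext q' c
        rw [stepz_eq]
        cases c
        · -- c0
          show colStep M true (((Ftrue M)^[0+0+q] (endCol M, endCol M)).1)
            ((clStep M)^[0+0+q] (endCol M)) q' = _
          rw [show (clStep M)^[0+0+q] (endCol M) =
              ((Ftrue M)^[0+0+q] (endCol M, endCol M)).2 from by rw [snd_Ftrue]]
          rw [fst_succ_true, show (0+0+q)+1 = 0+0+(q+1) from by omega]
          rfl
        · -- c1 : creg c1 B = true
          show colStep M true (((Ffalse M)^[0] ((Ftrue M)^[0+q] (endCol M, endCol M))).1)
            ((clStep M)^[0+0+q] (endCol M)) q' = _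
          rw [show ((Ffalse M)^[0] ((Ftrue M)^[0+q] (endCol M, endCol M))) =
              (Ftrue M)^[0+q] (endCol M, endCol M) from rfl]
          rw [show (clStep M)^[0+0+q] (endCol M) =
              ((Ftrue M)^[0+q] (endCol M, endCol M)).2 from by
            rw [snd_Ftrue, hE, show 0+0+q = 0+q from by omega]]
          rw [fst_succ_true, show (0+q)+1 = 0+(q+1) from by omega]
          rfl
        · -- c2 : creg c2 B = true
          show colStep M true (((Ffalse M)^[0+0] ((Ftrue M)^[q] (endCol M, endCol M))).1)
            ((clStep M)^[0+0+q] (endCol M)) q' = _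
          rw [show ((Ffalse M)^[0+0] ((Ftrue M)^[q] (endCol M, endCol M))) =
              (Ftrue M)^[q] (endCol M, endCol M) from rfl]
          rw [show (clStep M)^[0+0+q] (endCol M) =
              ((Ftrue M)^[q] (endCol M, endCol M)).2 from by
            rw [snd_Ftrue, hE, show 0+0+q = q from by omega]]
          rw [fst_succ_true]
          rfl
        · -- cl
          show colStep M false ((clStep M)^[0+0+q] (endCol M))
            ((clStep M)^[0+0+q] (endCol M)) q' = _
          rw [show colStep M false ((clStep M)^[0+0+q] (endCol M))
              ((clStep M)^[0+0+q] (endCol M)) = clStep M ((clStep M)^[0+0+q] (endCol M)) from rfl]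
          rw [cl_succ, show (0+0+q)+1 = 0+0+(q+1) from by omega]
          rfl
      | zero =>
        funext q' c
        cases c <;> rfl

/-- iterates of a self-map of a finite type are eventually periodic. -/
lemma iter_per {α : Type} [Finite α] (f : α → α) (x : α) :
    ∃ N P : ℕ, 0 < P ∧ ∀ k, N ≤ k → ∀ m : ℕ, f^[k + m*P] x = f^[k] x := by
  obtain ⟨i, j, hne, heq⟩ := Finite.exists_ne_map_eq_of_infinite (fun k : ℕ => f^[k] x)
  wlog hij : i < j generalizing i j
  · exact this j i hne.symm heq.symm (by omega)
  refine ⟨i, j - i, by omega, ?_⟩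
  have key : ∀ k, i ≤ k → f^[k + (j-i)] x = f^[k] x := by
    intro k hk
    have h1 : k + (j - i) = (k - i) + j := by omega
    have h2 : k = (k - i) + i := by omega
    rw [h1, Function.iterate_add_apply, ← heq, ← Function.iterate_add_apply, ← h2]
  intro k hk m
  induction m with
  | zero => simp
  | succ m ih =>
    have h1 : k + (m+1) * (j-i) = (k + m*(j-i)) + (j-i) := by ring
    rw [h1, key _ (by omega), ih]

end Part2

namespace Part2

open Zone

def g3 : ClockConstraint (Fin 2) := .conj (.neg (.le 0 1)) (.lt 1 1)
def gT2 : ClockConstraint (Fin 2) := .neg (.lt 0 0)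

lemma gT2_sat (v : Fin 2 → NNReal) : gT2.sat v := by
  simp [gT2, ClockConstraint.sat]

lemma g3_sat (v : Fin 2 → NNReal) : g3.sat v ↔ (1 < (v 0 : ℝ) ∧ (v 1 : ℝ) < 1) := by
  simp only [g3, ClockConstraint.sat, not_le, Nat.cast_one]

def r1 : NTARule Unit (Fin 2) (Fin 4) := ⟨0, (), gT2, 1, {0}⟩
def r2 : NTARule Unit (Fin 2) (Fin 4) := ⟨1, (), gT2, 2, {1}⟩
def r3 : NTARule Unit (Fin 2) (Fin 4) := ⟨2, (), g3, 3, ∅⟩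
def r4 : NTARule Unit (Fin 2) (Fin 4) := ⟨2, (), .neg g3, 2, ∅⟩
def r5 : NTARule Unit (Fin 2) (Fin 4) := ⟨3, (), gT2, 3, ∅⟩

def N2 : NTA Unit (Fin 2) (Fin 4) where
  init := 0
  accept := {3}
  rules := [r1, r2, r3, r4, r5]

lemma N2_det : N2.Deterministic := by
  intro v ρ1 h1 ρ2 h2 hsrc hlet hs1 hs2
  simp only [N2, List.mem_cons, List.not_mem_nil, or_false] at h1 h2
  rcases h1 with rfl | rfl | rfl | rfl | rfl <;> rcases h2 with rfl | rfl | rfl | rfl | rfl <;>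
    first
      | rfl
      | (exact absurd hsrc (by decide))
      | (exact absurd hs1 hs2)
      | (exact absurd hs2 hs1)

lemma n2_q3 : ∀ (w : TimedWord Unit) (v : Fin 2 → NNReal), N2.AccFrom w 3 v := by
  intro w
  induction w with
  | nil => intro v; show (3 : Fin 4) ∈ N2.accept; simp [N2]
  | cons e w ih =>
    obtain ⟨a, t⟩ := e
    intro v
    exact ⟨r5, by simp [N2], rfl, rfl, gT2_sat _, ih _⟩

lemma resetVal_empty {C : Type} (v : C → NNReal) : resetVal v ∅ = v :=
  funext fun x => resetVal_not_mem _ _ (by simp)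

lemma n2_q2 : ∀ (zs : List Zone) (T : ℝ),
    List.Pairwise (fun a b => base a ≤ base b) zs →
    (∀ z ∈ zs, T < base z + 1/4) →
    ∀ v : Fin 2 → NNReal, (v 0 : ℝ) = T - 1/4 → (v 1 : ℝ) = T - 1/2 →
    (N2.AccFrom (mkC zs T) 2 v ↔ Zone.M ∈ zs) := by
  intro zs
  induction zs with
  | nil =>
    intro T _ _ v _ _
    rw [mkC_nil]
    constructor
    · intro h; exact absurd h (by simp [NTA.AccFrom, N2])
    · intro h; simp at h
  | cons z zs ih =>
    intro T hpair hT2 v hv0 hv1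
    have hTz : T < base z + 1/4 := hT2 z (by simp)
    have hb := base_ge_one z
    have hb2 := base_le z
    have hnb := nxt_gt_base hTz
    have hnl := nxt_lt hTz
    have hnT := nxt_gt_T hTz
    have hd0 : (0:ℝ) ≤ nxt z T - T := by linarith
    have hu0 : ((v 0 + Real.toNNReal (nxt z T - T) : NNReal) : ℝ) = nxt z T - 1/4 := by
      push_cast
      rw [Real.coe_toNNReal _ hd0, hv0]; ring
    have hu1 : ((v 1 + Real.toNNReal (nxt z T - T) : NNReal) : ℝ) = nxt z T - 1/2 := by
      push_cast
      rw [Real.coe_toNNReal _ hd0, hv1]; ring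
    have hT2' : ∀ z' ∈ zs, nxt z T < base z' + 1/4 := by
      intro z' hz'
      have : base z ≤ base z' := (List.pairwise_cons.mp hpair).1 z' hz'
      linarith
    have hpair' := (List.pairwise_cons.mp hpair).2
    rw [mkC_cons]
    constructor
    · rintro ⟨ρ, hm, hsrc, _, hsat, hacc⟩
      simp only [N2, List.mem_cons, List.not_mem_nil, or_false] at hm
      rcases hm with rfl | rfl | rfl | rfl | rfl
      · exact absurd hsrc (by decide)
      · exact absurd hsrc (by decide)
      · -- rule r3 fired : the zone must be M
        rw [show r3.guard = g3 from rfl, g3_sat] at hsat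
        obtain ⟨hs1, hs2⟩ := hsat
        rw [hu0] at hs1
        rw [hu1] at hs2
        cases z
        · exfalso; norm_num [base] at hnl; linarith
        · simp
        · exfalso; norm_num [base] at hnb; linarith
      · -- rule r4 fired : recurse
        rw [show r4.resets = (∅ : Set (Fin 2)) from rfl, resetVal_empty] at hacc
        have := (ih (nxt z T) hpair' hT2' _ hu0 hu1).1 hacc
        simp [this]
      · exact absurd hsrc (by decide)
    · intro hM
      by_cases hz : z = Zone.M
      · subst hz
        refine ⟨r3, by simp [N2], rfl, rfl, ?_, ?_⟩
        · rw [show r3.guard = g3 from rfl, g3_sat]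
          constructor
          · show 1 < ((v 0 + Real.toNNReal (nxt Zone.M T - T) : NNReal) : ℝ)
            rw [hu0]; norm_num [base] at hnb; linarith
          · show ((v 1 + Real.toNNReal (nxt Zone.M T - T) : NNReal) : ℝ) < 1
            rw [hu1]; norm_num [base] at hnl; linarith
        · exact n2_q3 _ _
      · have hM' : Zone.M ∈ zs := by
          rcases List.mem_cons.mp hM with h | h
          · exact absurd h.symm hz
          · exact h
        refine ⟨r4, by simp [N2], rfl, rfl, ?_, ?_⟩
        · show ¬ g3.sat _
          rw [g3_sat]
          rintro ⟨hs1, hs2⟩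
          rw [hu0] at hs1
          rw [hu1] at hs2
          cases z
          · norm_num [base] at hnl; linarith
          · exact hz rfl
          · norm_num [base] at hnb; linarith
        · rw [show r4.resets = (∅ : Set (Fin 2)) from rfl, resetVal_empty]
          exact (ih (nxt z T) hpair' hT2' _ hu0 hu1).2 hM'

noncomputable def w2of (zs : List Zone) : TimedWord Unit :=
  ((), (1/4 : NNReal)) :: ((), (1/4 : NNReal)) :: mkC zs (1/2)

lemma n2_top (zs : List Zone) (hpair : List.Pairwise (fun a b => base a ≤ base b) zs) :
    (N2.AccFrom (w2of zs) 0 (fun _ => 0) ↔ Zone.M ∈ zs) := by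
  have hT2 : ∀ z ∈ zs, (1/2 : ℝ) < base z + 1/4 := by
    intro z _
    have := base_ge_one z
    linarith
  -- the valuation after the two initial events
  have hv0 : ∀ (W : TimedWord Unit) (q : Fin 4),
      N2.AccFrom (((), (1/4 : NNReal)) :: W) q (fun _ => 0) ↔
      ∃ ρ ∈ N2.rules, ρ.src = q ∧ ρ.letter = () ∧
        ρ.guard.sat (fun x => (fun _ => (0:NNReal)) x + (1/4 : NNReal)) ∧
        N2.AccFrom W ρ.tgt (resetVal (fun x => (fun _ => (0:NNReal)) x + (1/4:NNReal)) ρ.resets) :=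
    fun W q => Iff.rfl
  constructor
  · rintro ⟨ρ, hm, hsrc, _, _, hacc⟩
    simp only [N2, List.mem_cons, List.not_mem_nil, or_false] at hm
    rcases hm with rfl | rfl | rfl | rfl | rfl
    rotate_left
    · exact absurd hsrc (by decide)
    · exact absurd hsrc (by decide)
    · exact absurd hsrc (by decide)
    · exact absurd hsrc (by decide)
    obtain ⟨ρ', hm', hsrc', _, _, hacc'⟩ := hacc
    simp only [N2, List.mem_cons, List.not_mem_nil, or_false] at hm'
    rcases hm' with rfl | rfl | rfl | rfl | rfl
    · exact absurd hsrc' (by decide)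
    rotate_left
    · exact absurd hsrc' (by decide)
    · exact absurd hsrc' (by decide)
    · exact absurd hsrc' (by decide)
    set V := resetVal (fun x => resetVal (fun _ => (0:NNReal) + (1/4:NNReal)) r1.resets x +
      (1/4:NNReal)) r2.resets with hV
    refine (n2_q2 zs (1/2) hpair hT2 _ ?_ ?_).1 hacc'
    · show (V 0 : ℝ) = 1/2 - 1/4
      rw [hV, resetVal_not_mem _ _ (show (0 : Fin 2) ∉ r2.resets by
          show ¬ ((0:Fin 2) ∈ ({1} : Set (Fin 2))); simp),
        resetVal_mem _ _ (show (0 : Fin 2) ∈ r1.resets by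
          show (0:Fin 2) ∈ ({0} : Set (Fin 2)); simp)]
      push_cast; norm_num
    · show (V 1 : ℝ) = 1/2 - 1/2
      rw [hV, resetVal_mem _ _ (show (1 : Fin 2) ∈ r2.resets by
        show (1:Fin 2) ∈ ({1} : Set (Fin 2)); simp)]
      norm_num
  · intro hM
    refine ⟨r1, by simp [N2], rfl, rfl, gT2_sat _, ?_⟩
    refine ⟨r2, by simp [N2], rfl, rfl, gT2_sat _, ?_⟩
    set V := resetVal (fun x => resetVal (fun _ => (0:NNReal) + (1/4:NNReal)) r1.resets x +
      (1/4:NNReal)) r2.resets with hV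
    refine (n2_q2 zs (1/2) hpair hT2 _ ?_ ?_).2 hM
    · show (V 0 : ℝ) = 1/2 - 1/4
      rw [hV, resetVal_not_mem _ _ (show (0 : Fin 2) ∉ r2.resets by
          show ¬ ((0:Fin 2) ∈ ({1} : Set (Fin 2))); simp),
        resetVal_mem _ _ (show (0 : Fin 2) ∈ r1.resets by
          show (0:Fin 2) ∈ ({0} : Set (Fin 2)); simp)]
      push_cast; norm_num
    · show (V 1 : ℝ) = 1/2 - 1/2
      rw [hV, resetVal_mem _ _ (show (1 : Fin 2) ∈ r2.resets by
        show (1:Fin 2) ∈ ({1} : Set (Fin 2)); simp)]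
      norm_num

lemma M_mem_zList (p m q : ℕ) : Zone.M ∈ zList p m q ↔ 0 < m := by
  simp only [zList, List.mem_append, List.mem_replicate]
  simp

lemma pairwise_replicate_zone (n : ℕ) (z : Zone) :
    List.Pairwise (fun a b => base a ≤ base b) (List.replicate n z) := by
  induction n with
  | zero => simp
  | succ n ih =>
    rw [List.replicate_succ, List.pairwise_cons]
    exact ⟨fun y hy => by rw [List.eq_of_mem_replicate hy], ih⟩

lemma zList_sorted (p m q : ℕ) :
    List.Pairwise (fun a b => base a ≤ base b) (zList p m q) := by
  rw [zList, List.pairwise_append]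
  refine ⟨pairwise_replicate_zone p Zone.A, ?_, ?_⟩
  · rw [List.pairwise_append]
    refine ⟨pairwise_replicate_zone m Zone.M, pairwise_replicate_zone q Zone.B, ?_⟩
    intro x hx y hy
    rw [List.eq_of_mem_replicate hx, List.eq_of_mem_replicate hy]
    norm_num [base]
  · intro x hx y hy
    rw [List.eq_of_mem_replicate hx]
    rcases List.mem_append.mp hy with h | h <;> rw [List.eq_of_mem_replicate h] <;>
      norm_num [base]

end Part2

namespace Part2

variable {Q' : Type} (M : ATA Unit (Fin 1) Q')

lemma top_acc (zs zs' : List Zone)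
    (h1 : List.Pairwise (fun a b => base a ≤ base b) zs)
    (h1' : List.Pairwise (fun a b => base a ≤ base b) zs')
    (hv : vecOf M zs = vecOf M zs') :
    (M.AccFrom (w2of zs) M.init (fun _ => 0) ↔ M.AccFrom (w2of zs') M.init (fun _ => 0)) := by
  classical
  have hT2 : ∀ (l : List Zone), ∀ z ∈ l, (1/2 : ℝ) < base z + 1/4 := by
    intro l z _
    have := base_ge_one z
    linarith
  show (∃ gb ∈ M.trans M.init (), _ ∧ _) ↔ (∃ gb ∈ M.trans M.init (), _ ∧ _)
  refine exists_congr fun gb => and_congr Iff.rfl (and_congr Iff.rfl ?_)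
  refine PosBool.eval_congr _ _ _ fun qr => ?_
  show (∃ gb' ∈ M.trans qr.1 (), _ ∧ _) ↔ (∃ gb' ∈ M.trans qr.1 (), _ ∧ _)
  refine exists_congr fun gb' => and_congr Iff.rfl (and_congr Iff.rfl ?_)
  refine PosBool.eval_congr _ _ _ fun qr' => ?_
  set V : Fin 1 → NNReal := resetVal (fun x =>
    resetVal (fun x => (fun _ => (0:NNReal)) x + (1/4:NNReal)) qr.2 x + (1/4:NNReal)) qr'.2
    with hVdef
  set c : Cl := if (0:Fin 1) ∈ qr'.2 then Cl.c2 else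
    (if (0:Fin 1) ∈ qr.2 then Cl.c1 else Cl.c0) with hcdef
  have hcv : ClVal c (1/2) (V 0) := by
    by_cases h2 : (0:Fin 1) ∈ qr'.2
    · rw [hcdef, if_pos h2]
      show ((V 0 : NNReal) : ℝ) = 1/2 - 1/2
      rw [hVdef, resetVal_mem _ _ h2]
      norm_num
    · rw [hcdef, if_neg h2]
      by_cases h1 : (0:Fin 1) ∈ qr.2
      · rw [if_pos h1]
        show ((V 0 : NNReal) : ℝ) = 1/2 - 1/4
        rw [hVdef, resetVal_not_mem _ _ h2, resetVal_mem _ _ h1]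
        push_cast; norm_num
      · rw [if_neg h1]
        show ((V 0 : NNReal) : ℝ) = 1/2
        rw [hVdef, resetVal_not_mem _ _ h2, resetVal_not_mem _ _ h1]
        push_cast; norm_num
  exact (bridge M zs (1/2) h1 le_rfl (hT2 zs) qr'.1 c V hcv).trans
    (by rw [hv]; exact (bridge M zs' (1/2) h1' le_rfl (hT2 zs') qr'.1 c V hcv).symm)

theorem part2_sep (Q' : Type) (hQ' : Fintype Q') (M : ATA Unit (Fin 1) Q') :
    M.lang ≠ N2.lang := by
  classical
  intro hMN
  obtain ⟨Na, Pa, hPa, ha⟩ := iter_per (Ftrue M) (endCol M, endCol M)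
  obtain ⟨Nc, Pc, hPc, hc⟩ := iter_per (clStep M) (endCol M)
  set Q := max Na Nc with hQdef
  set x2 := (Ftrue M)^[Q] (endCol M, endCol M) with hx2
  obtain ⟨Nb, Pb, hPb, hb⟩ := iter_per (Ffalse M) x2
  set Pi := Pa * Pc * Pb with hPidef
  have hPi : 0 < Pi := by positivity
  set P := Nb with hPdef
  -- the two abstract vectors agree
  have hveq : absVec M P Pi Q = absVec M P 0 Q := by
    funext q' c
    cases c
    · -- c0
      show ((Ftrue M)^[P+Pi+Q] (endCol M, endCol M)).1 q' =
        ((Ftrue M)^[P+0+Q] (endCol M, endCol M)).1 q'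
      rw [show P+Pi+Q = (P+0+Q) + (Pc*Pb)*Pa from by rw [hPidef]; ring,
        ha (P+0+Q) (by omega) (Pc*Pb)]
    · -- c1
      show ((Ffalse M)^[P] ((Ftrue M)^[Pi+Q] (endCol M, endCol M))).1 q' =
        ((Ffalse M)^[P] ((Ftrue M)^[0+Q] (endCol M, endCol M))).1 q'
      rw [show Pi+Q = (0+Q) + (Pc*Pb)*Pa from by rw [hPidef]; ring,
        ha (0+Q) (by omega) (Pc*Pb)]
    · -- c2
      show ((Ffalse M)^[P+Pi] ((Ftrue M)^[Q] (endCol M, endCol M))).1 q' =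
        ((Ffalse M)^[P+0] ((Ftrue M)^[Q] (endCol M, endCol M))).1 q'
      rw [show P+Pi = (P+0) + (Pa*Pc)*Pb from by rw [hPidef]; ring]
      rw [← hx2, hb (P+0) (by omega) (Pa*Pc)]
    · -- cl
      show (clStep M)^[P+Pi+Q] (endCol M) q' = (clStep M)^[P+0+Q] (endCol M) q'
      rw [show P+Pi+Q = (P+0+Q) + (Pa*Pb)*Pc from by rw [hPidef]; ring,
        hc (P+0+Q) (by omega) (Pa*Pb)]
  have hvec : vecOf M (zList P Pi Q) = vecOf M (zList P 0 Q) := by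
    rw [vec_decomp, vec_decomp, hveq]
  have hacc := top_acc M (zList P Pi Q) (zList P 0 Q)
    (zList_sorted P Pi Q) (zList_sorted P 0 Q) hvec
  -- the N2 side
  have h1 : N2.AccFrom (w2of (zList P Pi Q)) 0 (fun _ => 0) :=
    (n2_top (zList P Pi Q) (zList_sorted P Pi Q)).2 ((M_mem_zList P Pi Q).2 hPi)
  have h2 : ¬ N2.AccFrom (w2of (zList P 0 Q)) 0 (fun _ => 0) := by
    intro h
    have := (n2_top (zList P 0 Q) (zList_sorted P 0 Q)).1 h
    rw [M_mem_zList] at this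
    omega
  -- transport through M.lang = N2.lang
  have hm1 : w2of (zList P Pi Q) ∈ M.lang := by
    rw [hMN]
    exact h1
  have hm2 : w2of (zList P 0 Q) ∉ M.lang := by
    rw [hMN]
    exact h2
  exact hm2 (hacc.1 hm1)

end Part2


/-- The classes of timed languages recognizable by
nondeterministic timed automata (with any number of clocks) and by one-clock
alternating timed automata are incomparable: some one-clock ATA language is
no NTA language, and some language of a deterministic two-clock NTA is no
one-clock ATA language. -/
theorem nta_and_one_clock_ata_incomparable :
    (∃ (Q : Type) (_ : Fintype Q) (M : ATA Unit (Fin 1) Q),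
        ∀ (C Q' : Type), Fintype C → Fintype Q' →
          ∀ N : NTA Unit C Q', N.lang ≠ M.lang) ∧
    (∃ (Q : Type) (_ : Fintype Q) (N : NTA Unit (Fin 2) Q), N.Deterministic ∧
        ∀ (Q' : Type), Fintype Q' →
          ∀ M : ATA Unit (Fin 1) Q', M.lang ≠ N.lang) := by
  constructor
  · exact ⟨Fin 3, inferInstance, Part1.M1,
      fun C Q' hC hQ' N => Part1.part1_sep C Q' hC hQ' N⟩
  · exact ⟨Fin 4, inferInstance, Part2.N2, Part2.N2_det,
      fun Q' hQ' M => Part2.part2_sep Q' hQ' M⟩
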